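/- arXiv:2210.06460 — 4 statements merged into one kernel-verified Lean document; each statement's English description precedes it below -/
import Mathlib

section
/- Under assumptions (A0) and (A1), for every region index l (1 ≤ l ≤ L): (a) on S_{β^l} the h smallest squared residuals are strictly ordered, i.e. r²_{k_1(β^l)}(β) < r²_{k_2(β^l)}(β) < ... < r²_{k_h(β^l)}(β) for every β ∈ S_{β^l}; and (b) for every η ∈ S_{β^l} there exists δ > 0 such that, almost surely, for every β in the open ball B(η, δ) one has O^n(β) = (1/n) Σ_{i=1}^h r²_{k_i(η)}(β), where k_i(η) = k_i(β^l). -/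
open MeasureTheory Finset Metric
open scoped ENNReal

noncomputable section

/-- The i-th residual `r_i(β) = y_i - w_i'β`. -/
def res {n p : ℕ} (w : Fin n → Fin p → ℝ) (y : Fin n → ℝ) (β : Fin p → ℝ) (i : Fin n) : ℝ :=
  y i - ∑ j, w i j * β j

/-- The empirical LTS objective `O^n(β) = (1/n) ∑_{i=1}^h r²_{i:n}(β)`: the sum of the `h`
smallest squared residuals, i.e. the minimum over all size-`h` index sets of the sum of the
corresponding squared residuals. -/
def Oemp {n p : ℕ} (w : Fin n → Fin p → ℝ) (y : Fin n → ℝ) (h : ℕ) (β : Fin p → ℝ) : ℝ :=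
  (1 / (n : ℝ)) *
    sInf ((fun s : Finset (Fin n) => ∑ i ∈ s, (res w y β i) ^ 2) '' {s | s.card = h})

/-- `k` enumerates the indices of the `h` smallest squared residuals at `β`,
in increasing order. -/
def IsHSeq {n p : ℕ} (w : Fin n → Fin p → ℝ) (y : Fin n → ℝ) {h : ℕ}
    (k : Fin h → Fin n) (β : Fin p → ℝ) : Prop :=
  Function.Injective k ∧
    (∀ i j : Fin h, i ≤ j → (res w y β (k i)) ^ 2 ≤ (res w y β (k j)) ^ 2) ∧
    (∀ m : Fin n, m ∉ Set.range k → ∀ i : Fin h, (res w y β (k i)) ^ 2 ≤ (res w y β m) ^ 2)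

/-- The region `S_{β^l}`: the set of `β` whose (unique) `h`-index sequence is `k`. -/
def Sreg {n p : ℕ} (w : Fin n → Fin p → ℝ) (y : Fin n → ℝ) {h : ℕ}
    (k : Fin h → Fin n) : Set (Fin p → ℝ) :=
  {β | IsHSeq w y k β ∧ ∀ k' : Fin h → Fin n, IsHSeq w y k' β → k' = k}

/-- Assumption (A1): the design matrix `X_n` and each of its `h`-row submatrices
have full rank `p`. -/
def A1 {n p : ℕ} (w : Fin n → Fin p → ℝ) (h : ℕ) : Prop :=
  (Matrix.of w).rank = p ∧
    ∀ s : Finset (Fin n), s.card = h →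
      ((Matrix.of w).submatrix (fun i : {x // x ∈ s} => (i : Fin n)) id).rank = p

/-- Assumption (A0): for every `β`, `W(β) = (y - w'β)²` has a density
(its law is absolutely continuous w.r.t. Lebesgue measure). -/
def A0 {Ω : Type*} [MeasurableSpace Ω] (P : Measure Ω) {n p : ℕ}
    (w : Ω → Fin n → Fin p → ℝ) (y : Ω → Fin n → ℝ) : Prop :=
  ∀ (β : Fin p → ℝ) (i : Fin n),
    (P.map fun ω => (res (w ω) (y ω) β i) ^ 2) ≪ (volume : Measure ℝ)

lemma sum_le_sum_card_eq {ι : Type*} {A B : Finset ι} (f : ι → ℝ) (hc : A.card = B.card)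
    (h : ∀ a ∈ A, ∀ b ∈ B, f a ≤ f b) : ∑ a ∈ A, f a ≤ ∑ b ∈ B, f b := by
  have e := Finset.equivOfCardEq hc
  calc ∑ a ∈ A, f a = ∑ a : A, f a := (Finset.sum_coe_sort A f).symm
    _ ≤ ∑ a : A, f (e a) := Finset.sum_le_sum fun a _ => h a a.2 (e a) (e a).2
    _ = ∑ b : B, f b := Equiv.sum_comp e fun b => f b
    _ = ∑ b ∈ B, f b := Finset.sum_coe_sort B f

lemma sum_min_of_sep {n : ℕ} (f : Fin n → ℝ) (s₀ s : Finset (Fin n)) (hc : s₀.card = s.card)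
    (h : ∀ a ∈ s₀, ∀ b ∉ s₀, f a ≤ f b) : ∑ i ∈ s₀, f i ≤ ∑ i ∈ s, f i := by
  have h1 : (s₀ \ s).card = (s \ s₀).card := by
    have e1 := Finset.card_sdiff_add_card_inter s₀ s
    have e2 := Finset.card_sdiff_add_card_inter s s₀
    rw [Finset.inter_comm] at e2
    omega
  have h2 : ∑ i ∈ s₀ \ s, f i ≤ ∑ i ∈ s \ s₀, f i :=
    sum_le_sum_card_eq f h1 fun a ha b hb =>
      h a (Finset.mem_sdiff.1 ha).1 b (Finset.mem_sdiff.1 hb).2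
  have d1 : ∑ i ∈ s₀, f i = ∑ i ∈ s₀ \ s, f i + ∑ i ∈ s₀ ∩ s, f i := by
    rw [← Finset.sum_union (Finset.sdiff_disjoint.mono_right Finset.inter_subset_right),
      Finset.sdiff_union_inter]
  have d2 : ∑ i ∈ s, f i = ∑ i ∈ s \ s₀, f i + ∑ i ∈ s₀ ∩ s, f i := by
    rw [Finset.inter_comm, ← Finset.sum_union
      (Finset.sdiff_disjoint.mono_right Finset.inter_subset_right),
      Finset.sdiff_union_inter]
  linarith

lemma Sreg_strict {n p hn : ℕ} (w : Fin n → Fin p → ℝ) (y : Fin n → ℝ)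
    (k : Fin hn → Fin n) (β : Fin p → ℝ) (hβ : β ∈ Sreg w y k)
    {i j : Fin hn} (hij : i < j) :
    (res w y β (k i)) ^ 2 < (res w y β (k j)) ^ 2 := by
  obtain ⟨⟨hinj, hmono, hout⟩, huniq⟩ := hβ
  rcases lt_or_ge ((res w y β (k i)) ^ 2) ((res w y β (k j)) ^ 2) with h | h
  · exact h
  have heq : (res w y β (k i)) ^ 2 = (res w y β (k j)) ^ 2 := le_antisymm (hmono i j hij.le) h
  set e := Equiv.swap i j with he
  have hval : ∀ t, (res w y β (k (e t))) ^ 2 = (res w y β (k t)) ^ 2 := by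
    intro t
    rcases eq_or_ne t i with rfl | hti
    · rw [he, Equiv.swap_apply_left, ← heq]
    rcases eq_or_ne t j with rfl | htj
    · rw [he, Equiv.swap_apply_right, heq]
    · rw [he, Equiv.swap_apply_of_ne_of_ne hti htj]
  have hrange : Set.range (k ∘ e) = Set.range k := by
    rw [Set.range_comp, e.range_eq_univ, Set.image_univ]
  have hseq' : IsHSeq w y (k ∘ e) β :=
    ⟨hinj.comp e.injective,
     fun a b hab => by
       rw [Function.comp_apply, Function.comp_apply, hval, hval]; exact hmono a b hab,
     fun m hm t => by
       rw [Function.comp_apply, hval]; exact hout m (hrange ▸ hm) t⟩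
  have hk := huniq _ hseq'
  have hji : k j = k i := by
    have := congrFun hk i
    rwa [Function.comp_apply, he, Equiv.swap_apply_left] at this
  exact absurd (hinj hji) hij.ne'

lemma Sreg_sep {n p hn : ℕ} (hhn : 0 < hn) (w : Fin n → Fin p → ℝ) (y : Fin n → ℝ)
    (k : Fin hn → Fin n) (η : Fin p → ℝ) (hη : η ∈ Sreg w y k)
    {m : Fin n} (hm : m ∉ Set.range k) (i : Fin hn) :
    (res w y η (k i)) ^ 2 < (res w y η m) ^ 2 := by
  obtain ⟨⟨hinj, hmono, hout⟩, huniq⟩ := hη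
  set L : Fin hn := ⟨hn - 1, by omega⟩ with hL
  have hle : ∀ t : Fin hn, t ≤ L := by
    intro t
    have := t.isLt
    exact Fin.le_def.2 (by simp [hL]; omega)
  refine lt_of_le_of_lt (hmono i L (hle i)) ?_
  rcases lt_or_ge ((res w y η (k L)) ^ 2) ((res w y η m) ^ 2) with h | h
  · exact h
  have heq : (res w y η (k L)) ^ 2 = (res w y η m) ^ 2 := le_antisymm (hout m hm L) h
  set k' := Function.update k L m with hk'
  have hkt : ∀ t, t ≠ L → k' t = k t := fun t ht => Function.update_of_ne ht _ _
  have hkL : k' L = m := Function.update_self _ _ _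
  have hval : ∀ t, (res w y η (k' t)) ^ 2 = (res w y η (k t)) ^ 2 := by
    intro t
    rcases eq_or_ne t L with rfl | ht
    · rw [hkL, ← heq]
    · rw [hkt t ht]
  have hinj' : Function.Injective k' := by
    intro a b hab
    rcases eq_or_ne a L with rfl | ha <;> rcases eq_or_ne b L with rfl | hb
    · rfl
    · rw [hkL, hkt b hb] at hab; exact absurd ⟨b, hab.symm⟩ hm
    · rw [hkL, hkt a ha] at hab; exact absurd ⟨a, hab⟩ hm
    · rw [hkt a ha, hkt b hb] at hab; exact hinj hab
  have hseq' : IsHSeq w y k' η := by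
    refine ⟨hinj', fun a b hab => by rw [hval, hval]; exact hmono a b hab, ?_⟩
    intro m' hm' t
    rw [hval]
    rcases eq_or_ne m' (k L) with rfl | hne
    · exact hmono t L (hle t)
    · have hm'' : m' ∉ Set.range k := by
        rintro ⟨t', rfl⟩
        rcases eq_or_ne t' L with rfl | ht'
        · exact hne rfl
        · exact hm' ⟨t', hkt t' ht'⟩
      exact hout m' hm'' t
  have hk := huniq _ hseq'
  exact absurd ⟨L, by rw [← hk, hkL]⟩ hm

/-- Lemma 2.1 (i): under (A0) and (A1), almost surely, for every region `S_{β^l}`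
(indexed by its `h`-index sequence `k`): (a) on `S_{β^l}` the `h` smallest squared residuals
are strictly ordered; (b) around every `η ∈ S_{β^l}` there is a ball on which `O^n` is
the average of the squared residuals with indices `k_1(η), …, k_h(η)`. -/
theorem stmt_0 {Ω : Type*} [MeasurableSpace Ω] (P : Measure Ω) [IsProbabilityMeasure P]
    (n p hn : ℕ) (α c : ℝ) (hc : 1 / 2 < c ∧ c < 1) (hα : α ∈ Set.Icc (1 / 2) c)
    (hhn : hn = ⌊α * n⌋₊ + 1) (hp : 2 ≤ p) (hpn : 2 * p < n) (hn2 : n ≤ 2 * hn)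
    (hnn : hn < n)
    (w : Ω → Fin n → Fin p → ℝ) (y : Ω → Fin n → ℝ)
    (hmeas : ∀ i : Fin n, Measurable fun ω => (w ω i, y ω i))
    (hw1 : ∀ ω i, w ω i ⟨0, by omega⟩ = 1)
    (hA0 : A0 P w y) (hA1 : ∀ ω, A1 (w ω) hn) :
    ∀ᵐ ω ∂P, ∀ k : Fin hn → Fin n,
      (∀ β ∈ Sreg (w ω) (y ω) k, ∀ i j : Fin hn, i < j →
        (res (w ω) (y ω) β (k i)) ^ 2 < (res (w ω) (y ω) β (k j)) ^ 2) ∧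
      (∀ η ∈ Sreg (w ω) (y ω) k, ∃ δ > (0 : ℝ), ∀ β ∈ ball η δ,
        Oemp (w ω) (y ω) hn β
          = (1 / (n : ℝ)) * ∑ i : Fin hn, (res (w ω) (y ω) β (k i)) ^ 2) := by
  classical
  refine Filter.Eventually.of_forall fun ω => fun k => ?_
  have hhn0 : 0 < hn := by omega
  refine ⟨fun β hβ i j hij => Sreg_strict _ _ k β hβ hij, ?_⟩
  intro η hη
  have hcont : ∀ i : Fin n, Continuous fun β : Fin p → ℝ => (res (w ω) (y ω) β i) ^ 2 := by
    intro i
    unfold res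
    fun_prop
  set U : Set (Fin p → ℝ) :=
    ⋂ q ∈ Finset.univ.filter (fun q : Fin hn × Fin n => q.2 ∉ Set.range k),
      {β | (res (w ω) (y ω) β (k q.1)) ^ 2 < (res (w ω) (y ω) β q.2) ^ 2} with hU
  have hUopen : IsOpen U := isOpen_biInter_finset fun q _ => isOpen_lt (hcont _) (hcont _)
  have hηU : η ∈ U := by
    rw [hU]
    simp only [Set.mem_iInter, Finset.mem_filter, Finset.mem_univ, true_and]
    intro q hq
    exact Sreg_sep hhn0 _ _ k η hη hq q.1
  obtain ⟨δ, hδ, hball⟩ := Metric.isOpen_iff.1 hUopen η hηU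
  refine ⟨δ, hδ, fun β hβ => ?_⟩
  have hβU := hball hβ
  have hsep : ∀ i : Fin hn, ∀ m : Fin n, m ∉ Set.range k →
      (res (w ω) (y ω) β (k i)) ^ 2 < (res (w ω) (y ω) β m) ^ 2 := by
    rw [hU] at hβU
    simp only [Set.mem_iInter, Finset.mem_filter, Finset.mem_univ, true_and] at hβU
    intro i m hm
    exact hβU (i, m) hm
  have hinj : Function.Injective k := hη.1.1
  set s₀ : Finset (Fin n) := Finset.image k Finset.univ with hs₀
  have hcard : s₀.card = hn := by
    rw [hs₀, Finset.card_image_of_injective _ hinj, Finset.card_univ, Fintype.card_fin]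
  have hmem : ∀ a, a ∈ s₀ ↔ a ∈ Set.range k := by
    intro a; simp [hs₀, Set.mem_range, eq_comm]
  show (1 / (n : ℝ)) *
      sInf ((fun s : Finset (Fin n) => ∑ i ∈ s, (res (w ω) (y ω) β i) ^ 2) '' {s | s.card = hn})
      = _
  set F : Fin n → ℝ := fun i => (res (w ω) (y ω) β i) ^ 2 with hF
  have hlow : ∀ s : Finset (Fin n), s.card = hn → ∑ i ∈ s₀, F i ≤ ∑ i ∈ s, F i := by
    intro s hs
    refine sum_min_of_sep F s₀ s (by rw [hcard, hs]) ?_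
    intro a ha b hb
    obtain ⟨i, -, rfl⟩ := Finset.mem_image.1 (hs₀ ▸ ha)
    exact (hsep i b fun hb' => hb ((hmem b).2 hb')).le
  have hins : ∑ i ∈ s₀, F i ∈ (fun s : Finset (Fin n) => ∑ i ∈ s, F i) '' {s | s.card = hn} :=
    ⟨s₀, hcard, rfl⟩
  have hInf : sInf ((fun s : Finset (Fin n) => ∑ i ∈ s, F i) '' {s | s.card = hn})
      = ∑ i ∈ s₀, F i := by
    apply le_antisymm
    · exact csInf_le ((Set.toFinite _).bddBelow) hins
    · exact le_csInf ⟨_, hins⟩ (by rintro b ⟨s, hs, rfl⟩; exact hlow s hs)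
  have hval : ∑ i ∈ s₀, F i = ∑ i : Fin hn, F (k i) := by
    rw [hs₀, Finset.sum_image fun a _ b _ h => hinj h]
  rw [hInf, hval]
end
end

section
/- Assume that W(β) = (y - w'β)² has a positive density for every β ∈ R^p and that E(ww') exists. Then the LTS population objective O(β) = E[(y - w'β)² 1((y - w'β)² ≤ q(β, α))] is continuous in β on R^p. -/
open MeasureTheory Metric Filter Set
open scoped ENNReal Classical Topology

noncomputable section

/-- The (lower) `a`-quantile of a distribution `ν` on `ℝ`. -/
def quant (ν : Measure ℝ) (a : ℝ) : ℝ :=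
  sInf {t : ℝ | a ≤ (ν (Set.Iic t)).toReal}

/-- `w = (1, x')'`. -/
def wcons {q : ℕ} (x : Fin q → ℝ) : Fin (q + 1) → ℝ := Fin.cons 1 x

/-- Population residual: for `z = (x, y)`, `r(β) = y - w'β` with `w = (1, x')'`. -/
def resP {q : ℕ} (z : (Fin q → ℝ) × ℝ) (β : Fin (q + 1) → ℝ) : ℝ :=
  z.2 - ∑ j, wcons z.1 j * β j

/-- `q(β, a)`: the `a`-quantile of `W(β) = (y - w'β)²` under `μ`. -/
def qLTS {q : ℕ} (μ : Measure ((Fin q → ℝ) × ℝ)) (β : Fin (q + 1) → ℝ) (a : ℝ) : ℝ :=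
  quant (μ.map fun z => (resP z β) ^ 2) a

/-- The population LTS objective `O(β) = E[(y - w'β)² 1((y - w'β)² ≤ q(β, a))]`. -/
def Opop {q : ℕ} (μ : Measure ((Fin q → ℝ) × ℝ)) (a : ℝ) (β : Fin (q + 1) → ℝ) : ℝ :=
  ∫ z, (if (resP z β) ^ 2 ≤ qLTS μ β a then (resP z β) ^ 2 else 0) ∂μ

/-- A distribution on `ℝ` has a positive density (on the support `(0, ∞)` of a squared
residual) if it is given by a Lebesgue density which is positive on `(0, ∞)`. -/
def HasPositiveDensity (ν : Measure ℝ) : Prop :=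
  ∃ f : ℝ → ℝ≥0∞, ν = (volume : Measure ℝ).withDensity f ∧ ∀ t : ℝ, 0 < t → 0 < f t

lemma measurable_wcons {q : ℕ} (j : Fin (q + 1)) :
    Measurable fun x : Fin q → ℝ => wcons x j := by
  unfold wcons
  cases j using Fin.cases with
  | zero => simp
  | succ i => simpa using measurable_pi_apply i

lemma measurable_resP {q : ℕ} (β : Fin (q + 1) → ℝ) :
    Measurable fun z : (Fin q → ℝ) × ℝ => resP z β := by
  unfold resP
  exact measurable_snd.sub (Finset.measurable_sum _ fun j _ =>
    ((measurable_wcons j).comp measurable_fst).mul_const _)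

lemma continuous_resP {q : ℕ} (z : (Fin q → ℝ) × ℝ) :
    Continuous fun β : Fin (q + 1) → ℝ => resP z β := by
  unfold resP
  exact continuous_const.sub (continuous_finset_sum _ fun j _ =>
    continuous_const.mul (continuous_apply j))

/-- Lemma 2.2 (i): if `W(β)` has a positive density for every `β` and `E(ww')` exists,
then the population LTS objective `O(β)` is continuous on `ℝ^p`. -/
theorem stmt_7 {q : ℕ} (μ : Measure ((Fin q → ℝ) × ℝ)) [IsProbabilityMeasure μ]
    (a c : ℝ) (hc : 1 / 2 < c ∧ c < 1) (ha : a ∈ Set.Icc (1 / 2) c)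
    (hdens : ∀ β : Fin (q + 1) → ℝ, HasPositiveDensity (μ.map fun z => (resP z β) ^ 2))
    (hmom : ∀ j j' : Fin (q + 1), Integrable (fun z => wcons z.1 j * wcons z.1 j') μ) :
    Continuous (Opop μ a) := by
  obtain ⟨hc1, hc2⟩ := hc
  obtain ⟨ha1, ha2⟩ := ha
  have ha0 : 0 < a := lt_of_lt_of_le (by norm_num) ha1
  have ha1' : a < 1 := lt_of_le_of_lt ha2 hc2
  -- basic measurability
  have hWm : ∀ β : Fin (q + 1) → ℝ, Measurable fun z : (Fin q → ℝ) × ℝ => (resP z β) ^ 2 :=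
    fun β => (measurable_resP β).pow_const 2
  set ν : (Fin (q + 1) → ℝ) → Measure ℝ := fun β => μ.map (fun z => (resP z β) ^ 2) with hνdef
  have hprob : ∀ β, IsProbabilityMeasure (ν β) :=
    fun β => Measure.isProbabilityMeasure_map (hWm β).aemeasurable
  have hνfin : ∀ β (s : Set ℝ), ν β s ≠ ∞ := fun β s => measure_ne_top _ _
  -- the pushforward has no atoms
  have hatom : ∀ β (t : ℝ), ν β {t} = 0 := by
    intro β t
    obtain ⟨f, hf, -⟩ := hdens β
    have : ν β {t} = ∫⁻ x in ({t} : Set ℝ), f x ∂(volume : Measure ℝ) := by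
      rw [hνdef]; simp only
      rw [hf, withDensity_apply _ (measurableSet_singleton t)]
    rw [this, Measure.restrict_eq_zero.mpr (by simp), lintegral_zero_measure]
  -- the CDF
  set F : (Fin (q + 1) → ℝ) → ℝ → ℝ := fun β t => (ν β (Set.Iic t)).toReal with hFdef
  have hFmono : ∀ β, Monotone (F β) := by
    intro β s t hst
    exact ENNReal.toReal_mono (hνfin β _) (measure_mono (Set.Iic_subset_Iic.mpr hst))
  have hFnn : ∀ β t, 0 ≤ F β t := fun β t => ENNReal.toReal_nonneg
  have hFneg : ∀ β (t : ℝ), t < 0 → F β t = 0 := by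
    intro β t ht
    have : ν β (Set.Iic t) = 0 := by
      rw [hνdef]; simp only
      rw [Measure.map_apply (hWm β) measurableSet_Iic]
      convert measure_empty (μ := μ)
      ext z
      simp only [Set.mem_preimage, Set.mem_Iic, Set.mem_empty_iff_false, iff_false, not_le]
      exact lt_of_lt_of_le ht (sq_nonneg _)
    rw [hFdef]; simp [this]
  -- the CDF tends to 1 at +infinity
  have hFtop : ∀ β, Tendsto (F β) atTop (𝓝 1) := by
    intro β
    have h1 : Tendsto (fun t => ν β (Set.Iic t)) atTop (𝓝 (ν β Set.univ)) :=
      tendsto_measure_Iic_atTop (ν β)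
    have h2 : ν β Set.univ = 1 := measure_univ
    rw [h2] at h1
    have := (ENNReal.tendsto_toReal (by norm_num : (1 : ℝ≥0∞) ≠ ∞)).comp h1
    exact this
  -- the CDF as an integral
  have hFint : ∀ β t, F β t
      = ∫ z, Set.indicator {z' : (Fin q → ℝ) × ℝ | (resP z' β) ^ 2 ≤ t} (fun _ => (1 : ℝ)) z ∂μ := by
    intro β t
    have hs : MeasurableSet {z' : (Fin q → ℝ) × ℝ | (resP z' β) ^ 2 ≤ t} :=
      measurableSet_le (hWm β) measurable_const
    rw [integral_indicator_const (1 : ℝ) hs]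
    rw [hFdef]; simp only
    rw [Measure.map_apply (hWm β) measurableSet_Iic]
    simp [Set.preimage, Set.Iic]
    rfl
  -- the CDF is continuous in β (for every fixed t)
  have htendF : ∀ β (t : ℝ),
      Tendsto (fun β' => F β' t) (𝓝 β) (𝓝 (F β t)) := by
    intro β t
    have key : Tendsto
        (fun β' => ∫ z, Set.indicator {z' : (Fin q → ℝ) × ℝ | (resP z' β') ^ 2 ≤ t}
          (fun _ => (1 : ℝ)) z ∂μ) (𝓝 β)
        (𝓝 (∫ z, Set.indicator {z' : (Fin q → ℝ) × ℝ | (resP z' β) ^ 2 ≤ t}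
          (fun _ => (1 : ℝ)) z ∂μ)) := by
      apply tendsto_integral_filter_of_dominated_convergence (bound := fun _ => (1 : ℝ))
      · apply Eventually.of_forall
        intro β'
        exact (measurable_const.indicator
          (measurableSet_le (hWm β') measurable_const)).aestronglyMeasurable
      · apply Eventually.of_forall
        intro β'
        apply ae_of_all
        intro z
        by_cases h : (resP z β') ^ 2 ≤ t <;> simp [Set.indicator_apply, h]
      · exact integrable_const 1
      · -- pointwise convergence off the null set {W β = t}
        have hnull : μ {z | (resP z β) ^ 2 = t} = 0 := by
          have := hatom β t
          rw [hνdef] at this; simp only at this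
          rwa [Measure.map_apply (hWm β) (measurableSet_singleton t)] at this
        filter_upwards [measure_eq_zero_iff_ae_notMem.mp hnull] with z hz
        have hcont : Tendsto (fun β' => (resP z β') ^ 2) (𝓝 β) (𝓝 ((resP z β) ^ 2)) :=
          ((continuous_resP z).pow 2).tendsto β
        rcases lt_or_gt_of_ne (hz : ¬(resP z β) ^ 2 = t) with hlt | hgt
        · have hev : ∀ᶠ β' in 𝓝 β, (resP z β') ^ 2 ≤ t := by
            filter_upwards [hcont.eventually_lt_const hlt] with β' h using h.le
          have : ∀ᶠ β' in 𝓝 β,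
              Set.indicator {z' : (Fin q → ℝ) × ℝ | (resP z' β') ^ 2 ≤ t}
                (fun _ => (1 : ℝ)) z = 1 := by
            filter_upwards [hev] with β' h using by simp [Set.indicator_apply, h]
          rw [show Set.indicator {z' : (Fin q → ℝ) × ℝ | (resP z' β) ^ 2 ≤ t}
              (fun _ => (1 : ℝ)) z = 1 by simp [Set.indicator_apply, hlt.le]]
          exact tendsto_const_nhds.congr' (by filter_upwards [this] with β' h using h.symm)
        · have hev : ∀ᶠ β' in 𝓝 β, ¬(resP z β') ^ 2 ≤ t := by
            filter_upwards [hcont.eventually_const_lt hgt] with β' h using not_le.mpr h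
          have : ∀ᶠ β' in 𝓝 β,
              Set.indicator {z' : (Fin q → ℝ) × ℝ | (resP z' β') ^ 2 ≤ t}
                (fun _ => (1 : ℝ)) z = 0 := by
            filter_upwards [hev] with β' h using by simp [Set.indicator_apply, h]
          rw [show Set.indicator {z' : (Fin q → ℝ) × ℝ | (resP z' β) ^ 2 ≤ t}
              (fun _ => (1 : ℝ)) z = 0 by simp [Set.indicator_apply, not_le.mpr hgt]]
          exact tendsto_const_nhds.congr' (by filter_upwards [this] with β' h using h.symm)
    simpa only [← hFint] using key
  -- the quantile
  set Q : (Fin (q + 1) → ℝ) → ℝ := fun β => qLTS μ β a with hQdef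
  have hQeq : ∀ β, Q β = sInf {t : ℝ | a ≤ F β t} := fun β => rfl
  have hSne : ∀ β, {t : ℝ | a ≤ F β t}.Nonempty := by
    intro β
    obtain ⟨T, hT⟩ := ((hFtop β).eventually_const_lt ha1').exists
    exact ⟨T, hT.le⟩
  have hSbdd : ∀ β, BddBelow {t : ℝ | a ≤ F β t} := by
    intro β
    refine ⟨0, fun t ht => ?_⟩
    by_contra h
    push_neg at h
    have ht' : a ≤ F β t := ht
    rw [hFneg β t h] at ht'
    exact absurd (lt_of_lt_of_le ha0 ht') (lt_irrefl 0)
  -- F β (Q β) = a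
  have hFQ : ∀ β, F β (Q β) = a := by
    intro β
    have hu : Tendsto (fun n : ℕ => Q β + 1 / (n + 1)) atTop (𝓝 (Q β)) := by
      have := tendsto_one_div_add_atTop_nhds_zero_nat (𝕜 := ℝ)
      simpa using tendsto_const_nhds.add this
    have hge : a ≤ F β (Q β) := by
      -- right continuity
      have h1 : ∀ n : ℕ, a ≤ F β (Q β + 1 / (n + 1)) := by
        intro n
        have hpos : Q β < Q β + 1 / (n + 1) := by
          have : (0 : ℝ) < 1 / (n + 1) := by positivity
          linarith
        obtain ⟨s, hs, hslt⟩ := (csInf_lt_iff (hSbdd β) (hSne β)).mp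
          (lt_of_eq_of_lt (hQeq β).symm hpos)
        exact le_trans hs (hFmono β hslt.le)
      have h2 : Tendsto (fun n : ℕ => ν β (Set.Iic (Q β + 1 / (n + 1)))) atTop
          (𝓝 (ν β (Set.Iic (Q β)))) := by
        have hanti : Antitone fun n : ℕ => Set.Iic (Q β + 1 / (n + 1)) := by
          intro n m hnm
          apply Set.Iic_subset_Iic.mpr
          have : (1 : ℝ) / (m + 1) ≤ 1 / (n + 1) := by
            apply one_div_le_one_div_of_le (by positivity)
            exact_mod_cast by omega
          linarith
        have := tendsto_measure_iInter_atTop (μ := ν β)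
          (fun n => measurableSet_Iic.nullMeasurableSet) hanti ⟨0, hνfin β _⟩
        have hiInter : (⋂ n : ℕ, Set.Iic (Q β + 1 / (n + 1))) = Set.Iic (Q β) := by
          ext x
          simp only [Set.mem_iInter, Set.mem_Iic]
          constructor
          · intro h
            exact ge_of_tendsto' hu h
          · intro h n
            have : (0 : ℝ) < 1 / (n + 1) := by positivity
            linarith
        rwa [hiInter] at this
      have h3 : Tendsto (fun n : ℕ => F β (Q β + 1 / (n + 1))) atTop (𝓝 (F β (Q β))) := by
        have := (ENNReal.tendsto_toReal (hνfin β _)).comp h2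
        exact this
      exact ge_of_tendsto h3 (Eventually.of_forall h1)
    have hle : F β (Q β) ≤ a := by
      -- left continuity + no atom
      have hIic : ν β (Set.Iic (Q β)) = ν β (Set.Iio (Q β)) := by
        apply le_antisymm
        · calc ν β (Set.Iic (Q β)) ≤ ν β (Set.Iio (Q β) ∪ {Q β}) := by
                apply measure_mono
                intro x hx
                rcases lt_or_eq_of_le (Set.mem_Iic.mp hx) with h | h
                · exact Or.inl h
                · exact Or.inr (by simp [h])
            _ ≤ ν β (Set.Iio (Q β)) + ν β {Q β} := measure_union_le _ _
            _ = ν β (Set.Iio (Q β)) := by rw [hatom β (Q β), add_zero]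
        · exact measure_mono Set.Iio_subset_Iic_self
      have h2 : Tendsto (fun n : ℕ => ν β (Set.Iic (Q β - 1 / (n + 1)))) atTop
          (𝓝 (ν β (Set.Iio (Q β)))) := by
        have hmon : Monotone fun n : ℕ => Set.Iic (Q β - 1 / (n + 1)) := by
          intro n m hnm
          apply Set.Iic_subset_Iic.mpr
          have : (1 : ℝ) / (m + 1) ≤ 1 / (n + 1) := by
            apply one_div_le_one_div_of_le (by positivity)
            exact_mod_cast by omega
          linarith
        have := tendsto_measure_iUnion_atTop (μ := ν β) hmon
        have hiUnion : (⋃ n : ℕ, Set.Iic (Q β - 1 / (n + 1))) = Set.Iio (Q β) := by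
          ext x
          simp only [Set.mem_iUnion, Set.mem_Iic, Set.mem_Iio]
          constructor
          · rintro ⟨n, hn⟩
            have : (0 : ℝ) < 1 / (n + 1) := by positivity
            linarith
          · intro h
            obtain ⟨n, hn⟩ := exists_nat_one_div_lt (show (0 : ℝ) < Q β - x by linarith)
            exact ⟨n, by linarith⟩
        rwa [hiUnion] at this
      have h3 : Tendsto (fun n : ℕ => F β (Q β - 1 / (n + 1))) atTop
          (𝓝 ((ν β (Set.Iio (Q β))).toReal)) := by
        have := (ENNReal.tendsto_toReal (hνfin β _)).comp h2
        exact this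
      have h4 : ∀ n : ℕ, F β (Q β - 1 / (n + 1)) ≤ a := by
        intro n
        by_contra h
        push_neg at h
        have hmem : Q β - 1 / (n + 1) ∈ {t : ℝ | a ≤ F β t} := h.le
        have := csInf_le (hSbdd β) hmem
        rw [← hQeq β] at this
        have hpos : (0 : ℝ) < 1 / (n + 1) := by positivity
        linarith
      have h5 : (ν β (Set.Iio (Q β))).toReal ≤ a := le_of_tendsto h3 (Eventually.of_forall h4)
      rw [hFdef]; simp only
      rw [hIic]
      exact h5
    exact le_antisymm hle hge
  -- layer cake representation of the objective
  have hO : ∀ β, Opop μ a β = ∫ t in Set.Ioi (0 : ℝ), max (a - F β t) 0 := by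
    intro β
    set X : ((Fin q → ℝ) × ℝ) → ℝ := fun z => if (resP z β) ^ 2 ≤ Q β then (resP z β) ^ 2 else 0
      with hXdef
    have hXm : Measurable X := Measurable.ite
      (measurableSet_le (hWm β) measurable_const) (hWm β) measurable_const
    have hXnn : ∀ z, 0 ≤ X z := by
      intro z
      simp only [hXdef]
      by_cases h : (resP z β) ^ 2 ≤ Q β <;> simp [h, sq_nonneg]
    have hXbd : ∀ z, ‖X z‖ ≤ max (Q β) 0 := by
      intro z
      rw [Real.norm_of_nonneg (hXnn z)]
      simp only [hXdef]
      by_cases h : (resP z β) ^ 2 ≤ Q β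
      · simp only [h, if_true]
        exact le_max_of_le_left h
      · simp [h]
    have hXint : Integrable X μ :=
      (integrable_const (max (Q β) 0)).mono' hXm.aestronglyMeasurable (ae_of_all _ hXbd)
    have hlc := hXint.integral_eq_integral_meas_lt (ae_of_all _ hXnn)
    have hOeq : Opop μ a β = ∫ z, X z ∂μ := rfl
    rw [hOeq, hlc]
    apply setIntegral_congr_fun measurableSet_Ioi
    intro t ht
    simp only
    have hset : {z | t < X z} = (fun z => (resP z β) ^ 2) ⁻¹' (Set.Ioc t (Q β)) := by
      ext z
      simp only [Set.mem_setOf_eq, Set.mem_preimage, Set.mem_Ioc, hXdef]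
      by_cases h : (resP z β) ^ 2 ≤ Q β
      · simp [h]
      · simp [h, lt_asymm (Set.mem_Ioi.mp ht)]
    rw [hset, measureReal_def, ← Measure.map_apply (hWm β) measurableSet_Ioc]
    by_cases htQ : t ≤ Q β
    · have hsub : Set.Ioc t (Q β) = Set.Iic (Q β) \ Set.Iic t := by
        ext x; simp [Set.mem_Ioc, Set.mem_diff, and_comm]
      rw [hsub, measure_diff (Set.Iic_subset_Iic.mpr htQ) measurableSet_Iic.nullMeasurableSet
        (hνfin β _)]
      rw [ENNReal.toReal_sub_of_le (measure_mono (Set.Iic_subset_Iic.mpr htQ)) (hνfin β _)]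
      have : (ν β (Set.Iic (Q β))).toReal = a := hFQ β
      rw [show ((μ.map fun z => resP z β ^ 2) (Set.Iic (Q β))).toReal = (ν β (Set.Iic (Q β))).toReal from rfl]
      rw [show ((μ.map fun z => resP z β ^ 2) (Set.Iic t)).toReal = F β t from rfl] at *
      rw [this]
      exact (max_eq_left (by linarith [hFmono β htQ, hFQ β])).symm
    · push_neg at htQ
      rw [Set.Ioc_eq_empty (not_lt.mpr htQ.le), measure_empty]
      have : a ≤ F β t := by
        rw [← hFQ β]
        exact hFmono β htQ.le
      simp [max_eq_right (by linarith : a - F β t ≤ 0)]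
  -- continuity via dominated convergence
  rw [continuous_iff_continuousAt]
  intro β
  unfold ContinuousAt
  obtain ⟨T, hT⟩ := ((hFtop β).eventually_const_lt ha1').exists
  have key : Tendsto (fun β' => ∫ t in Set.Ioi (0 : ℝ), max (a - F β' t) 0) (𝓝 β)
      (𝓝 (∫ t in Set.Ioi (0 : ℝ), max (a - F β t) 0)) := by
    apply tendsto_integral_filter_of_dominated_convergence
      (bound := Set.indicator (Set.Ioc (0 : ℝ) T) (fun _ => a))
    · apply Eventually.of_forall
      intro β'
      exact ((measurable_const.sub (hFmono β').measurable).max measurable_const).aestronglyMeasurable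
    · filter_upwards [(htendF β T).eventually_const_lt hT] with β' hβ'
      filter_upwards [ae_restrict_mem measurableSet_Ioi] with t ht
      rw [Real.norm_of_nonneg (le_max_right _ _)]
      by_cases hle : t ≤ T
      · rw [Set.indicator_of_mem (Set.mem_Ioc.mpr ⟨ht, hle⟩)]
        exact max_le (by linarith [hFnn β' t]) ha0.le
      · push_neg at hle
        rw [Set.indicator_of_notMem (by simp [Set.mem_Ioc, hle.not_ge])]
        have : a ≤ F β' t := le_trans hβ'.le (hFmono β' hle.le)
        exact le_of_eq (max_eq_right (by linarith))
    · apply Integrable.restrict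
      rw [integrable_indicator_iff measurableSet_Ioc]
      exact integrableOn_const measure_Ioc_lt_top.ne
    · apply ae_of_all
      intro t
      exact (tendsto_const_nhds.sub (htendF β t)).max tendsto_const_nhds
  have heq : Opop μ a = fun β' => ∫ t in Set.Ioi (0 : ℝ), max (a - F β' t) 0 := funext hO
  rw [heq]
  exact key
end
end

section
/- Assume that W(β) = (y - w'β)² has a positive density for every β, that q_ε(z, β, α) is continuous in β, and that P((t - v'β)² = q_ε(z, β, α)) = 0 for every β ∈ R^p. Then both minimizers β_lts(F_{(x', y)}, α) = argmin_β O(F_{(x', y)}, β, α) and β_lts(F_ε(z), α) = argmin_β O(F_ε(z), β, α) exist. -/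
open MeasureTheory Metric
open scoped ENNReal Classical

noncomputable section

/-- The point-mass contaminated distribution `F_ε(z) = (1 - ε) F + ε δ_z`. -/
def contam {q : ℕ} (μ : Measure ((Fin q → ℝ) × ℝ)) (ε : ℝ) (z : (Fin q → ℝ) × ℝ) :
    Measure ((Fin q → ℝ) × ℝ) :=
  ENNReal.ofReal (1 - ε) • μ + ENNReal.ofReal ε • Measure.dirac z

/-! ### Auxiliary development for the proof -/

open Filter Set Topology

namespace LTSAux

variable {q : ℕ}

/-- Abbreviation for the sample space. -/
abbrev Om (q : ℕ) := (Fin q → ℝ) × ℝ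

/-- Abbreviation for the parameter space. -/
abbrev Par (q : ℕ) := Fin (q + 1) → ℝ

/-- The linear functional `β ↦ w'β` at a sample point. -/
def Wdot (ω : Om q) (β : Par q) : ℝ := ∑ j, wcons ω.1 j * β j

lemma resP_eq (ω : Om q) (β : Par q) : resP ω β = ω.2 - Wdot ω β := rfl

lemma Wdot_add (ω : Om q) (β γ : Par q) : Wdot ω (β + γ) = Wdot ω β + Wdot ω γ := by
  simp [Wdot, mul_add, Finset.sum_add_distrib]

lemma Wdot_smul (ω : Om q) (c : ℝ) (β : Par q) : Wdot ω (c • β) = c * Wdot ω β := by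
  simp only [Wdot, Pi.smul_apply, smul_eq_mul, Finset.mul_sum]
  exact Finset.sum_congr rfl fun j _ => by ring

lemma Wdot_sub (ω : Om q) (β γ : Par q) : Wdot ω (β - γ) = Wdot ω β - Wdot ω γ := by
  simp [Wdot, mul_sub, Finset.sum_sub_distrib]

lemma measurable_wcons_apply (j : Fin (q + 1)) :
    Measurable fun ω : Om q => wcons ω.1 j := by
  induction j using Fin.cases with
  | zero => simpa [wcons] using measurable_const
  | succ i => simpa [wcons, Function.comp_def] using (measurable_pi_apply i).comp measurable_fst

lemma measurable_Wdot (β : Par q) : Measurable fun ω : Om q => Wdot ω β := by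
  apply Finset.measurable_sum
  exact fun j _ => (measurable_wcons_apply j).mul measurable_const

lemma measurable_resP (β : Par q) : Measurable fun ω : Om q => resP ω β :=
  measurable_snd.sub (measurable_Wdot β)

lemma measurable_resP_sq (β : Par q) : Measurable fun ω : Om q => (resP ω β) ^ 2 :=
  (measurable_resP β).pow_const 2

/-- Bound on the sensitivity of `Wdot` in `β` (sup-norm on `Par q`). -/
def Wabs (ω : Om q) : ℝ := ∑ j, |wcons ω.1 j|

lemma measurable_Wabs : Measurable fun ω : Om q => Wabs ω :=
  Finset.measurable_sum _ fun j _ => (measurable_wcons_apply j).abs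

lemma abs_Wdot_le (ω : Om q) (β : Par q) : |Wdot ω β| ≤ Wabs ω * ‖β‖ := by
  calc |Wdot ω β| ≤ ∑ j, |wcons ω.1 j * β j| := Finset.abs_sum_le_sum_abs _ _
    _ ≤ ∑ j, |wcons ω.1 j| * ‖β‖ := by
        apply Finset.sum_le_sum
        intro j _
        rw [abs_mul]
        exact mul_le_mul_of_nonneg_left (norm_le_pi_norm β j) (abs_nonneg _)
    _ = Wabs ω * ‖β‖ := by rw [Wabs, Finset.sum_mul]

/-- The sub-CDF of the squared residual. -/
def Fcdf (ρ : Measure (Om q)) (β : Par q) (t : ℝ) : ℝ≥0∞ :=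
  ρ {ω | (resP ω β) ^ 2 ≤ t}

lemma measurableSet_resSq_le (β : Par q) (t : ℝ) :
    MeasurableSet {ω : Om q | (resP ω β) ^ 2 ≤ t} :=
  measurableSet_le (measurable_resP_sq β) measurable_const

lemma Fcdf_mono (ρ : Measure (Om q)) (β : Par q) : Monotone (Fcdf ρ β) := by
  intro s t hst
  exact measure_mono (fun ω hω => le_trans hω hst)

lemma measurable_Fcdf (ρ : Measure (Om q)) (β : Par q) : Measurable (Fcdf ρ β) :=
  (Fcdf_mono ρ β).measurable

lemma Fcdf_le_univ (ρ : Measure (Om q)) (β : Par q) (t : ℝ) : Fcdf ρ β t ≤ ρ univ :=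
  measure_mono (subset_univ _)

lemma Fcdf_ne_top (ρ : Measure (Om q)) [IsFiniteMeasure ρ] (β : Par q) (t : ℝ) :
    Fcdf ρ β t ≠ ∞ :=
  (lt_of_le_of_lt (Fcdf_le_univ ρ β t) (measure_lt_top ρ univ)).ne

/-- `trimE ρ α β = ∫_{(0,∞)} (α - F_β(t))⁺ dt`: the trimmed second moment at level `α`. -/
def trimE (ρ : Measure (Om q)) (α : ℝ≥0∞) (β : Par q) : ℝ≥0∞ :=
  ∫⁻ t in Ioi (0 : ℝ), (α - Fcdf ρ β t) ∂volume

/-- Truncated version of `trimE` (integral over `(0, j]` only). -/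
def trimCE (ρ : Measure (Om q)) (α : ℝ≥0∞) (β : Par q) (j : ℝ) : ℝ≥0∞ :=
  ∫⁻ t in Ioc (0 : ℝ) j, (α - Fcdf ρ β t) ∂volume

lemma trimCE_le_trimE (ρ : Measure (Om q)) (α : ℝ≥0∞) (β : Par q) (j : ℝ) :
    trimCE ρ α β j ≤ trimE ρ α β :=
  lintegral_mono' (Measure.restrict_mono Ioc_subset_Ioi_self le_rfl) le_rfl

lemma trimE_mono_level (ρ : Measure (Om q)) {α α' : ℝ≥0∞} (h : α ≤ α') (β : Par q) :
    trimE ρ α β ≤ trimE ρ α' β :=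
  lintegral_mono fun _ => tsub_le_tsub_right h _

/-- For `ρ' ≤ ρ` (e.g. a restriction), the trimmed moment increases. -/
lemma trimE_anti_measure {ρ ρ' : Measure (Om q)} (h : ρ' ≤ ρ) (α : ℝ≥0∞) (β : Par q) :
    trimE ρ α β ≤ trimE ρ' α β :=
  lintegral_mono fun t => tsub_le_tsub_left (h _) _

lemma trimCE_indicator (ρ : Measure (Om q)) (α : ℝ≥0∞) (β : Par q) (j : ℝ) :
    trimCE ρ α β j
      = ∫⁻ t in Ioi (0 : ℝ), (Ioc (0 : ℝ) j).indicator (fun t => α - Fcdf ρ β t) t ∂volume := by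
  rw [lintegral_indicator measurableSet_Ioc, Measure.restrict_restrict measurableSet_Ioc,
    Set.inter_eq_left.2 Ioc_subset_Ioi_self]
  rfl

/-- Monotone convergence of the truncated trimmed moments to the full one. -/
lemma tendsto_trimCE_nat (ρ : Measure (Om q)) (α : ℝ≥0∞) (β : Par q) :
    Tendsto (fun n : ℕ => trimCE ρ α β n) atTop (𝓝 (trimE ρ α β)) := by
  have hmeas : ∀ n : ℕ, Measurable ((Ioc (0:ℝ) (n:ℝ)).indicator (fun t => α - Fcdf ρ β t)) :=
    fun n => (measurable_const.sub (measurable_Fcdf ρ β)).indicator measurableSet_Ioc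
  have hmono : Monotone fun n : ℕ =>
      (Ioc (0:ℝ) (n:ℝ)).indicator (fun t => α - Fcdf ρ β t) := by
    intro m n hmn
    exact indicator_le_indicator_of_subset (Ioc_subset_Ioc_right (by exact_mod_cast hmn))
      (fun t => zero_le)
  have hsup : ∀ t : ℝ, t ∈ Ioi (0:ℝ) →
      (⨆ n : ℕ, (Ioc (0:ℝ) (n:ℝ)).indicator (fun t => α - Fcdf ρ β t) t)
        = α - Fcdf ρ β t := by
    intro t ht
    obtain ⟨n, hn⟩ := exists_nat_ge t
    apply le_antisymm
    · exact iSup_le fun n => indicator_le_self' (fun _ _ => zero_le) t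
    · refine le_iSup_of_le n ?_
      rw [indicator_of_mem (Set.mem_Ioc.mpr ⟨Set.mem_Ioi.mp ht, hn⟩)]
  have h1 : ∀ n : ℕ, trimCE ρ α β n
      = ∫⁻ t in Ioi (0:ℝ), (Ioc (0:ℝ) (n:ℝ)).indicator (fun t => α - Fcdf ρ β t) t ∂volume :=
    fun n => trimCE_indicator ρ α β n
  simp only [h1]
  have hswap := lintegral_iSup (μ := volume.restrict (Ioi (0:ℝ))) hmeas hmono
  have heq : trimE ρ α β = ∫⁻ t in Ioi (0:ℝ),
      (⨆ n : ℕ, (Ioc (0:ℝ) (n:ℝ)).indicator (fun t => α - Fcdf ρ β t) t) ∂volume :=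
    setLIntegral_congr_fun measurableSet_Ioi (fun t ht => (hsup t ht).symm)
  rw [heq, hswap]
  exact tendsto_atTop_iSup fun m n hmn => lintegral_mono fun t => hmono hmn t

end LTSAux

namespace LTSAux

variable {q : ℕ}

/-- A finite measure has countably many atoms along a measurable function. -/
lemma countable_atoms (ρ : Measure (Om q)) [IsFiniteMeasure ρ] (g : Om q → ℝ)
    (hg : Measurable g) : Set.Countable {t : ℝ | ρ {ω | g ω = t} ≠ 0} := by
  have h := MeasureTheory.Measure.countable_meas_pos_of_disjoint_of_meas_iUnion_ne_top
    (μ := ρ) (As := fun t : ℝ => g ⁻¹' {t})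
    (fun t => hg (measurableSet_singleton t))
    (fun s t hst => Set.disjoint_left.mpr (fun ω hs ht => hst (hs.symm.trans ht)))
    (ne_top_of_le_ne_top (measure_ne_top ρ univ) (measure_mono (subset_univ _)))
  have : {t : ℝ | ρ {ω | g ω = t} ≠ 0} = {t : ℝ | 0 < ρ (g ⁻¹' {t})} := by
    ext t
    simp [pos_iff_ne_zero, Set.preimage, Set.mem_singleton_iff]
  rwa [this]

lemma tendsto_resP (ω : Om q) {u : ℕ → Par q} {γ : Par q} (hu : Tendsto u atTop (𝓝 γ)) :
    Tendsto (fun k => resP ω (u k)) atTop (𝓝 (resP ω γ)) := by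
  have hW : Tendsto (fun k => Wdot ω (u k)) atTop (𝓝 (Wdot ω γ)) := by
    unfold Wdot
    apply tendsto_finset_sum
    intro j _
    exact (tendsto_const_nhds).mul ((tendsto_pi_nhds.mp hu j))
  simpa [resP_eq] using tendsto_const_nhds.sub hW

/-- Convergence of the CDFs at almost every `t` along a convergent parameter sequence. -/
lemma Fcdf_tendsto_ae (ρ : Measure (Om q)) [IsFiniteMeasure ρ] {u : ℕ → Par q} {γ : Par q}
    (hu : Tendsto u atTop (𝓝 γ)) :
    ∀ᵐ t ∂(volume.restrict (Ioi (0:ℝ))),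
      Tendsto (fun k => Fcdf ρ (u k) t) atTop (𝓝 (Fcdf ρ γ t)) := by
  have hD : Set.Countable {t : ℝ | ρ {ω | (resP ω γ) ^ 2 = t} ≠ 0} :=
    countable_atoms ρ _ (measurable_resP_sq γ)
  have hD0 : (volume.restrict (Ioi (0:ℝ))) {t : ℝ | ρ {ω | (resP ω γ) ^ 2 = t} ≠ 0} = 0 :=
    hD.measure_zero _
  filter_upwards [measure_eq_zero_iff_ae_notMem.mp hD0] with t ht
  have ht' : ρ {ω | (resP ω γ) ^ 2 = t} = 0 := by simpa using ht
  -- express the measures as integrals of indicators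
  have hrw : ∀ β : Par q, Fcdf ρ β t = ∫⁻ ω, ({ω : Om q | (resP ω β) ^ 2 ≤ t}).indicator
      (1 : Om q → ℝ≥0∞) ω ∂ρ := fun β =>
    (lintegral_indicator_one (measurableSet_resSq_le β t)).symm
  simp only [hrw]
  apply tendsto_lintegral_of_dominated_convergence (bound := fun _ => (1:ℝ≥0∞))
  · exact fun k => (measurable_const.indicator (measurableSet_resSq_le (u k) t))
  · exact fun k => ae_of_all _ (Set.indicator_le fun ω _ => le_rfl)
  · simp [lintegral_one, measure_ne_top]
  · -- pointwise convergence of indicators a.e.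
    filter_upwards [measure_eq_zero_iff_ae_notMem.mp ht'] with ω hω
    have hne : (resP ω γ) ^ 2 ≠ t := by simpa using hω
    have hres : Tendsto (fun k => (resP ω (u k)) ^ 2) atTop (𝓝 ((resP ω γ) ^ 2)) :=
      (tendsto_resP ω hu).pow 2
    rcases lt_or_gt_of_ne hne with hlt | hgt
    · -- r² < t : indicators eventually 1
      have hev : ∀ᶠ k in atTop, (resP ω (u k)) ^ 2 ≤ t :=
        (hres.eventually (eventually_lt_nhds hlt)).mono fun k hk => hk.le
      have hmem : ω ∈ {ω : Om q | (resP ω γ) ^ 2 ≤ t} := hlt.le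
      rw [Set.indicator_of_mem hmem]
      refine Tendsto.congr' ?_
        (tendsto_const_nhds : Tendsto (fun _ : ℕ => ((1 : Om q → ℝ≥0∞) ω)) atTop _)
      filter_upwards [hev] with k hk
      exact (Set.indicator_of_mem
        (show ω ∈ {ω : Om q | (resP ω (u k)) ^ 2 ≤ t} from hk) _).symm
    · -- r² > t : indicators eventually 0
      have hev : ∀ᶠ k in atTop, ¬ ((resP ω (u k)) ^ 2 ≤ t) :=
        (hres.eventually (eventually_gt_nhds hgt)).mono fun k hk => not_le.mpr hk
      have hmem : ω ∉ {ω : Om q | (resP ω γ) ^ 2 ≤ t} := not_le.mpr hgt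
      rw [Set.indicator_of_notMem hmem]
      refine Tendsto.congr' ?_
        (tendsto_const_nhds : Tendsto (fun _ : ℕ => (0 : ℝ≥0∞)) atTop _)
      filter_upwards [hev] with k hk
      exact (Set.indicator_of_notMem
        (show ω ∉ {ω : Om q | (resP ω (u k)) ^ 2 ≤ t} from hk) _).symm

/-- Fatou-type lower semicontinuity: a limit point of a sequence with asymptotically bounded
truncated trimmed moments bounds the trimmed moment of the limit. -/
lemma fatou_trim (ρ : Measure (Om q)) [IsFiniteMeasure ρ] {lam bseq : ℕ → ℝ≥0∞}
    {u : ℕ → Par q} {j : ℕ → ℝ} {al b : ℝ≥0∞} {γ : Par q}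
    (hlam : Tendsto lam atTop (𝓝 al)) (hu : Tendsto u atTop (𝓝 γ))
    (hj : Tendsto j atTop atTop) (hb : Tendsto bseq atTop (𝓝 b))
    (hle : ∀ᶠ k in atTop, trimCE ρ (lam k) (u k) (j k) ≤ bseq k) :
    trimE ρ al γ ≤ b := by
  set g : ℕ → ℝ → ℝ≥0∞ := fun k t =>
    (Ioc (0:ℝ) (j k)).indicator (fun t => lam k - Fcdf ρ (u k) t) t with hg
  have hgidentity : ∀ k, trimCE ρ (lam k) (u k) (j k)
      = ∫⁻ t in Ioi (0:ℝ), g k t ∂volume := fun k => trimCE_indicator ρ (lam k) (u k) (j k)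
  have hgmeas : ∀ k, Measurable (g k) := fun k =>
    (measurable_const.sub (measurable_Fcdf ρ (u k))).indicator measurableSet_Ioc
  -- pointwise a.e. lower bound on the liminf
  have hae : ∀ᵐ t ∂(volume.restrict (Ioi (0:ℝ))),
      al - Fcdf ρ γ t ≤ Filter.liminf (fun k => g k t) atTop := by
    filter_upwards [Fcdf_tendsto_ae ρ hu, ae_restrict_mem measurableSet_Ioi] with t htF htmem
    have hjev : ∀ᶠ k in atTop, t ∈ Ioc (0:ℝ) (j k) := by
      filter_upwards [hj.eventually_ge_atTop t] with k hk
      exact ⟨Set.mem_Ioi.mp htmem, hk⟩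
    have htend : Tendsto (fun k => g k t) atTop (𝓝 (al - Fcdf ρ γ t)) := by
      have h1 : Tendsto (fun k => lam k - Fcdf ρ (u k) t) atTop (𝓝 (al - Fcdf ρ γ t)) :=
        ENNReal.Tendsto.sub hlam htF (Or.inr (Fcdf_ne_top ρ γ t))
      apply h1.congr'
      filter_upwards [hjev] with k hk
      exact (Set.indicator_of_mem hk (fun t => lam k - Fcdf ρ (u k) t)).symm
    exact htend.liminf_eq.ge
  calc trimE ρ al γ ≤ ∫⁻ t in Ioi (0:ℝ), Filter.liminf (fun k => g k t) atTop ∂volume :=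
        lintegral_mono_ae hae
    _ ≤ Filter.liminf (fun k => ∫⁻ t in Ioi (0:ℝ), g k t ∂volume) atTop :=
        lintegral_liminf_le hgmeas
    _ = Filter.liminf (fun k => trimCE ρ (lam k) (u k) (j k)) atTop := by
        simp only [hgidentity]
    _ ≤ Filter.liminf bseq atTop := liminf_le_liminf hle
    _ = b := hb.liminf_eq

end LTSAux

namespace LTSAux

variable {q : ℕ}

/-- The subspace of directions that are `ρ`-a.e. degenerate for the regression functional. -/
def Vsub (ρ : Measure (Om q)) : Submodule ℝ (Par q) where
  carrier := {d | ρ {ω | Wdot ω d ≠ 0} = 0}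
  zero_mem' := by simp [Wdot]
  add_mem' := by
    intro a b ha hb
    refine measure_mono_null (fun ω hω => ?_) (measure_union_null ha hb)
    by_contra hcon
    simp only [Set.mem_union, Set.mem_setOf_eq, not_or, not_not] at hcon
    exact hω (by simp [Wdot_add, hcon.1, hcon.2])
  smul_mem' := by
    intro c d hd
    refine measure_mono_null (fun ω hω => ?_) hd
    by_contra hcon
    simp only [Set.mem_setOf_eq, not_not] at hcon
    exact hω (by simp [Wdot_smul, hcon])

lemma mem_Vsub_iff (ρ : Measure (Om q)) (d : Par q) :
    d ∈ Vsub ρ ↔ ρ {ω | Wdot ω d ≠ 0} = 0 := Iff.rfl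

lemma Vsub_mono {ρ ρ' : Measure (Om q)} (h : ρ' ≤ ρ) : Vsub ρ ≤ Vsub ρ' := by
  intro d hd
  exact le_antisymm (le_trans (h _) (le_of_eq hd)) zero_le

lemma Fcdf_invariant (ρ : Measure (Om q)) {β γ : Par q} (h : β - γ ∈ Vsub ρ) :
    Fcdf ρ β = Fcdf ρ γ := by
  funext t
  have hae : ∀ᵐ ω ∂ρ, Wdot ω (β - γ) = 0 := by
    rw [ae_iff]
    exact (mem_Vsub_iff ρ _).mp h
  apply measure_congr
  rw [Filter.eventuallyEq_set]
  filter_upwards [hae] with ω hω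
  have hres : resP ω β = resP ω γ := by
    have := Wdot_sub ω β γ
    rw [hω] at this
    simp only [resP_eq]
    linarith [this.symm]
  simp [hres]

lemma trimE_invariant (ρ : Measure (Om q)) (α : ℝ≥0∞) {β γ : Par q}
    (h : β - γ ∈ Vsub ρ) : trimE ρ α β = trimE ρ α γ := by
  unfold trimE
  rw [Fcdf_invariant ρ h]

lemma trimCE_invariant (ρ : Measure (Om q)) (α : ℝ≥0∞) {β γ : Par q} (j : ℝ)
    (h : β - γ ∈ Vsub ρ) : trimCE ρ α β j = trimCE ρ α γ j := by
  unfold trimCE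
  rw [Fcdf_invariant ρ h]

/-- The key quantitative statement, proven by induction on the codimension of `Vsub ρ`:
any asymptotic bound `b` on truncated trimmed moments along a sequence is attained
(up to `≤`) by the trimmed moment of a *fixed* parameter. -/
def Bst (ρ : Measure (Om q)) : Prop :=
  ∀ (lam bseq : ℕ → ℝ≥0∞) (β : ℕ → Par q) (j : ℕ → ℝ) (al b : ℝ≥0∞),
    0 < al → al ≤ ρ univ → Tendsto lam atTop (𝓝 al) → Tendsto j atTop atTop →
    Tendsto bseq atTop (𝓝 b) →
    (∀ᶠ k in atTop, trimCE ρ (lam k) (β k) (j k) ≤ bseq k) →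
    ∃ γ, trimE ρ al γ ≤ b

/-- From the bound statement, existence of a minimizer of the trimmed moment. -/
lemma AofB (ρ : Measure (Om q)) [IsFiniteMeasure ρ] (hB : Bst ρ) {al : ℝ≥0∞}
    (h0 : 0 < al) (h1 : al ≤ ρ univ) :
    ∃ γ, ∀ β, trimE ρ al γ ≤ trimE ρ al β := by
  by_cases hg : (⨅ γ', trimE ρ al γ') = ⊤
  · refine ⟨0, fun β => ?_⟩
    have := iInf_eq_top.mp hg
    rw [this 0, this β]
  · set g := ⨅ γ', trimE ρ al γ' with hgdef
    have hstep : ∀ m : ℕ, ∃ γ', trimE ρ al γ' < g + ((m:ℝ≥0∞) + 1)⁻¹ := by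
      intro m
      rw [← iInf_lt_iff]
      exact ENNReal.lt_add_right hg (by simp)
    choose γseq hγseq using hstep
    have hinv : Tendsto (fun m : ℕ => ((m:ℝ≥0∞) + 1)⁻¹) atTop (𝓝 0) := by
      have h1' := ENNReal.tendsto_inv_nat_nhds_zero
      have h2 := h1'.comp (tendsto_add_atTop_nat 1)
      have h3 : ((fun n : ℕ => ((n:ℝ≥0∞))⁻¹) ∘ fun a => a + 1)
          = fun m : ℕ => ((m:ℝ≥0∞) + 1)⁻¹ := by
        funext m
        simp [Function.comp]
      rwa [h3] at h2
    have hbseq : Tendsto (fun m : ℕ => g + ((m:ℝ≥0∞) + 1)⁻¹) atTop (𝓝 g) := by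
      have := (tendsto_const_nhds :
        Tendsto (fun _ : ℕ => g) atTop (𝓝 g)).add hinv
      simpa using this
    obtain ⟨γ, hγ⟩ := hB (fun _ => al) (fun m => g + ((m:ℝ≥0∞) + 1)⁻¹) γseq
      (fun m => (m:ℝ)) al g h0 h1 tendsto_const_nhds tendsto_natCast_atTop_atTop hbseq
      (Eventually.of_forall fun m =>
        le_trans (trimCE_le_trimE ρ al (γseq m) m) (hγseq m).le)
    exact ⟨γ, fun β => le_trans hγ (iInf_le _ β)⟩

end LTSAux

namespace LTSAux

variable {q : ℕ}

/-- Bounded case: a subsequence of the parameters stays in a ball, so a limit point exists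
and Fatou gives the required bound. -/
lemma bounded_case (ρ : Measure (Om q)) [IsFiniteMeasure ρ] {lam bseq : ℕ → ℝ≥0∞}
    {u : ℕ → Par q} {j : ℕ → ℝ} {al b : ℝ≥0∞} {C : ℝ}
    (hlam : Tendsto lam atTop (𝓝 al)) (hj : Tendsto j atTop atTop)
    (hb : Tendsto bseq atTop (𝓝 b))
    (hle : ∀ᶠ k in atTop, trimCE ρ (lam k) (u k) (j k) ≤ bseq k)
    (hbd : ∃ᶠ k in atTop, ‖u k‖ ≤ C) :
    ∃ γ, trimE ρ al γ ≤ b := by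
  obtain ⟨φ, hφ, hφC⟩ := Filter.extraction_of_frequently_atTop hbd
  have hx : ∀ n, u (φ n) ∈ Metric.closedBall (0 : Par q) C := fun n =>
    mem_closedBall_zero_iff.mpr (hφC n)
  obtain ⟨γ, -, ψ, hψ, hψtend⟩ :=
    tendsto_subseq_of_bounded (Metric.isBounded_closedBall) hx
  have hcomp : Tendsto (fun k => φ (ψ k)) atTop atTop := (hφ.comp hψ).tendsto_atTop
  refine ⟨γ, fatou_trim ρ (hlam.comp hcomp) hψtend (hj.comp hcomp) (hb.comp hcomp) ?_⟩
  exact hcomp.eventually hle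

/-- Geometric separation: on the good event, the squared residual is eventually huge. -/
lemma key_sep {d : Par q} {m : ℕ} {uk : Par q} (hnm : 1 ≤ ‖uk‖)
    (hdist : ‖(‖uk‖⁻¹ • uk) - d‖ ≤ 1 / (2 * ((m : ℝ) + 1) ^ 2))
    {ω : Om q} (hω1 : 1 / ((m : ℝ) + 1) ≤ |Wdot ω d|) (hω2 : |ω.2| ≤ (m : ℝ) + 1)
    (hω3 : Wabs ω ≤ (m : ℝ) + 1)
    (hsk : 0 ≤ ‖uk‖ / (2 * ((m : ℝ) + 1)) - ((m : ℝ) + 1)) :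
    (‖uk‖ / (2 * ((m : ℝ) + 1)) - ((m : ℝ) + 1)) ^ 2 ≤ (resP ω uk) ^ 2 := by
  set M : ℝ := (m : ℝ) + 1 with hM
  have hM0 : 0 < M := by positivity
  set dk : Par q := ‖uk‖⁻¹ • uk with hdk
  have habs : |Wdot ω dk - Wdot ω d| ≤ Wabs ω * ‖dk - d‖ := by
    rw [← Wdot_sub]
    exact abs_Wdot_le ω (dk - d)
  have hWa0 : 0 ≤ Wabs ω := Finset.sum_nonneg fun j _ => abs_nonneg _
  have habs' : |Wdot ω dk - Wdot ω d| ≤ M * (1 / (2 * M ^ 2)) := by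
    calc |Wdot ω dk - Wdot ω d| ≤ Wabs ω * ‖dk - d‖ := habs
      _ ≤ M * (1 / (2 * M ^ 2)) := by
          apply mul_le_mul hω3 hdist (norm_nonneg _) hM0.le
  have hWdk : 1 / (2 * M) ≤ |Wdot ω dk| := by
    have h1 : |Wdot ω d| - |Wdot ω dk - Wdot ω d| ≤ |Wdot ω dk| := by
      have := abs_sub_abs_le_abs_sub (Wdot ω d) (Wdot ω dk)
      have h2 : |Wdot ω d - Wdot ω dk| = |Wdot ω dk - Wdot ω d| := abs_sub_comm _ _
      linarith
    have h3 : M * (1 / (2 * M ^ 2)) = 1 / (2 * M) := by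
      field_simp
    rw [h3] at habs'
    have : 1 / M - 1 / (2 * M) ≤ |Wdot ω dk| := by linarith
    have h4 : 1 / M - 1 / (2 * M) = 1 / (2 * M) := by
      field_simp
      ring
    linarith [h4 ▸ this]
  have huk_eq : uk = ‖uk‖ • dk := by
    rw [hdk, smul_smul, mul_inv_cancel₀ (by positivity : ‖uk‖ ≠ 0), one_smul]
  have hWuk : ‖uk‖ / (2 * M) ≤ |Wdot ω uk| := by
    conv_rhs => rw [huk_eq]
    rw [Wdot_smul, abs_mul, abs_of_nonneg (norm_nonneg uk)]
    rw [div_eq_mul_one_div]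
    exact mul_le_mul_of_nonneg_left hWdk (norm_nonneg uk)
  have hres : ‖uk‖ / (2 * M) - M ≤ |resP ω uk| := by
    have : |Wdot ω uk| - |ω.2| ≤ |resP ω uk| := by
      have := abs_sub_abs_le_abs_sub (Wdot ω uk) (ω.2)
      have h2 : |Wdot ω uk - ω.2| = |resP ω uk| := by
        rw [resP_eq, abs_sub_comm]
      linarith
    linarith
  calc (‖uk‖ / (2 * M) - M) ^ 2 ≤ |resP ω uk| ^ 2 := by
        apply pow_le_pow_left₀ hsk hres
    _ = (resP ω uk) ^ 2 := by rw [sq_abs]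

end LTSAux

namespace LTSAux

variable {q : ℕ}

/-- Escape case of the induction: the parameters escape to infinity; along a subsequence the
normalized directions converge to some `d ∉ Vsub ρ`; the relevant mass concentrates on the
hyperplane population `{w'd = 0}`, whose degenerate subspace is strictly larger, so the
inductive hypothesis applies. -/
lemma escape_case (n : ℕ)
    (IH : ∀ (ρ' : Measure (Om q)) [IsFiniteMeasure ρ'],
      q + 1 ≤ n + Module.finrank ℝ (Vsub ρ') → Bst ρ')
    (ρ : Measure (Om q)) [IsFiniteMeasure ρ]
    (hdim : q + 1 ≤ (n + 1) + Module.finrank ℝ (Vsub ρ))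
    {U : Submodule ℝ (Par q)} (hUV : IsCompl (Vsub ρ) U)
    {lam0 bseq0 : ℕ → ℝ≥0∞} {u0 : ℕ → Par q} {j0 : ℕ → ℝ} {al b : ℝ≥0∞}
    (humem : ∀ k, u0 k ∈ U) (h0 : 0 < al) (h1 : al ≤ ρ univ)
    (hlam0 : Tendsto lam0 atTop (𝓝 al)) (hj0 : Tendsto j0 atTop atTop)
    (hb0 : Tendsto bseq0 atTop (𝓝 b)) (hbtop : b ≠ ⊤)
    (hle0 : ∀ᶠ k in atTop, trimCE ρ (lam0 k) (u0 k) (j0 k) ≤ bseq0 k)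
    (hnorm0 : Tendsto (fun k => ‖u0 k‖) atTop atTop) :
    ∃ γ, trimE ρ al γ ≤ b := by
  have halne : al ≠ ⊤ := (lt_of_le_of_lt h1 (measure_lt_top ρ _)).ne
  -- Step A : pass to a subsequence along which the normalized directions converge.
  obtain ⟨N, hN⟩ := eventually_atTop.mp (hnorm0.eventually_ge_atTop 1)
  have hKcompact : IsCompact ((U : Set (Par q)) ∩ Metric.sphere 0 1) :=
    (isCompact_sphere (0 : Par q) 1).of_isClosed_subset
      ((U.closed_of_finiteDimensional).inter Metric.isClosed_sphere) inter_subset_right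
  have hxmem : ∀ k : ℕ, ‖u0 (k + N)‖⁻¹ • u0 (k + N) ∈ (U : Set (Par q)) ∩ Metric.sphere 0 1 := by
    intro k
    have h1k : (1:ℝ) ≤ ‖u0 (k + N)‖ := hN _ (Nat.le_add_left N k)
    have hne : u0 (k + N) ≠ 0 := by
      intro hcon
      rw [hcon, norm_zero] at h1k
      linarith
    refine ⟨U.smul_mem _ (humem _), ?_⟩
    rw [mem_sphere_zero_iff_norm]
    exact norm_smul_inv_norm (𝕜 := ℝ) hne
  obtain ⟨d, hdK, ψ, hψ, hdtend⟩ := hKcompact.tendsto_subseq hxmem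
  set σ : ℕ → ℕ := fun k => ψ k + N with hσdef
  have hσ : Tendsto σ atTop atTop :=
    (tendsto_add_atTop_nat N).comp hψ.tendsto_atTop
  -- renamed subsequences
  set u : ℕ → Par q := fun k => u0 (σ k) with hu_def
  set lam : ℕ → ℝ≥0∞ := fun k => lam0 (σ k) with hlam_def
  set j : ℕ → ℝ := fun k => j0 (σ k) with hj_def
  set bseq : ℕ → ℝ≥0∞ := fun k => bseq0 (σ k) with hbseq_def
  have hlam : Tendsto lam atTop (𝓝 al) := hlam0.comp hσ
  have hj : Tendsto j atTop atTop := hj0.comp hσ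
  have hb : Tendsto bseq atTop (𝓝 b) := hb0.comp hσ
  have hle : ∀ᶠ k in atTop, trimCE ρ (lam k) (u k) (j k) ≤ bseq k := hσ.eventually hle0
  have hnorm : Tendsto (fun k => ‖u k‖) atTop atTop := hnorm0.comp hσ
  have h1le : ∀ k, (1:ℝ) ≤ ‖u k‖ := fun k => hN _ (Nat.le_add_left N (ψ k))
  have hdk : Tendsto (fun k => ‖u k‖⁻¹ • u k) atTop (𝓝 d) := hdtend
  -- Step B : facts about the direction d
  have hdU : d ∈ U := hdK.1
  have hdnorm : ‖d‖ = 1 := mem_sphere_zero_iff_norm.mp hdK.2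
  have hd0 : d ≠ 0 := by
    intro hcon
    rw [hcon, norm_zero] at hdnorm
    exact one_ne_zero hdnorm.symm
  have hdV : d ∉ Vsub ρ := by
    intro hmem
    have : d ∈ Vsub ρ ⊓ U := ⟨hmem, hdU⟩
    rw [hUV.inf_eq_bot, Submodule.mem_bot] at this
    exact hd0 this
  -- Step C : the hyperplane population
  set Hset : Set (Om q) := {ω : Om q | Wdot ω d = 0} with hHdef
  have hHmeas : MeasurableSet Hset := (measurable_Wdot d) (measurableSet_singleton 0)
  set ρH : Measure (Om q) := ρ.restrict Hset with hρHdef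
  have hdimH : q + 1 ≤ n + Module.finrank ℝ (Vsub ρH) := by
    have hVle : Vsub ρ ≤ Vsub ρH := Vsub_mono Measure.restrict_le_self
    have hdH : d ∈ Vsub ρH := by
      rw [mem_Vsub_iff]
      have hmeas' : MeasurableSet {ω : Om q | Wdot ω d ≠ 0} :=
        ((measurable_Wdot d) (measurableSet_singleton 0)).compl
      rw [hρHdef, Measure.restrict_apply hmeas']
      convert measure_empty (μ := ρ)
      ext ω
      simp only [Set.mem_inter_iff, Set.mem_setOf_eq, Set.mem_empty_iff_false, iff_false,
        not_and, hHdef]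
      exact fun h1' h2' => h1' h2'
    have hlt : Vsub ρ < Vsub ρH := lt_of_le_of_ne hVle (fun hcon => hdV (hcon ▸ hdH))
    have hrk : Module.finrank ℝ (Vsub ρ) < Module.finrank ℝ (Vsub ρH) :=
      Submodule.finrank_lt_finrank_of_lt hlt
    omega
  -- Step D : good events exhausting the off-hyperplane population
  set offSet : ℕ → Set (Om q) := fun m =>
    {ω : Om q | 1 / ((m:ℝ) + 1) ≤ |Wdot ω d| ∧ |ω.2| ≤ (m:ℝ) + 1 ∧ Wabs ω ≤ (m:ℝ) + 1}
    with hoffdef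
  have hoffmeas : ∀ m, MeasurableSet (offSet m) := by
    intro m
    have hrepr : offSet m = {ω : Om q | 1 / ((m:ℝ) + 1) ≤ |Wdot ω d|} ∩
        ({ω : Om q | |ω.2| ≤ (m:ℝ) + 1} ∩ {ω : Om q | Wabs ω ≤ (m:ℝ) + 1}) := by
      ext ω
      simp only [hoffdef, Set.mem_setOf_eq, Set.mem_inter_iff]
    rw [hrepr]
    exact (measurableSet_le measurable_const (measurable_Wdot d).abs).inter
      ((measurableSet_le measurable_snd.abs measurable_const).inter
        (measurableSet_le measurable_Wabs measurable_const))
  set Sbad : ℕ → Set (Om q) := fun m => {ω : Om q | Wdot ω d ≠ 0} \ offSet m with hSbaddef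
  have hSbadmeas : ∀ m, MeasurableSet (Sbad m) :=
    fun m => (((measurable_Wdot d) (measurableSet_singleton 0)).compl).diff (hoffmeas m)
  set η : ℕ → ℝ≥0∞ := fun m => ρ (Sbad m) with hηdef
  have hoffmono : Monotone offSet := by
    intro m m' hmm' ω hω
    obtain ⟨hω1, hω2, hω3⟩ := hω
    have hcast : ((m:ℝ) + 1) ≤ ((m':ℝ) + 1) := by
      have : (m:ℝ) ≤ (m':ℝ) := Nat.cast_le.mpr hmm'
      linarith
    refine ⟨le_trans ?_ hω1, le_trans hω2 hcast, le_trans hω3 hcast⟩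
    apply one_div_le_one_div_of_le (by positivity) hcast
  have hη0 : Tendsto η atTop (𝓝 0) := by
    have hanti : Antitone Sbad := fun m m' hmm' =>
      diff_subset_diff_right (hoffmono hmm')
    have hinter : ⋂ m, Sbad m = ∅ := by
      ext ω
      simp only [Set.mem_iInter, Set.mem_empty_iff_false, iff_false, not_forall]
      by_cases hω : Wdot ω d = 0
      · exact ⟨0, fun hcon => hcon.1 hω⟩
      · obtain ⟨m₁, hm₁⟩ := exists_nat_one_div_lt (abs_pos.mpr hω)
        obtain ⟨m₂, hm₂⟩ := exists_nat_ge |ω.2|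
        obtain ⟨m₃, hm₃⟩ := exists_nat_ge (Wabs ω)
        refine ⟨max (max m₁ m₂) m₃, fun hcon => hcon.2 ?_⟩
        have hc1 : (m₁ : ℝ) ≤ (max (max m₁ m₂) m₃ : ℕ) := by
          exact_mod_cast le_trans (le_max_left m₁ m₂) (le_max_left _ m₃)
        have hc2 : (m₂ : ℝ) ≤ (max (max m₁ m₂) m₃ : ℕ) := by
          exact_mod_cast le_trans (le_max_right m₁ m₂) (le_max_left _ m₃)
        have hc3 : (m₃ : ℝ) ≤ (max (max m₁ m₂) m₃ : ℕ) := by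
          exact_mod_cast le_max_right (max m₁ m₂) m₃
        refine ⟨?_, by linarith, by linarith⟩
        have : 1 / ((max (max m₁ m₂) m₃ : ℕ) + 1 : ℝ) ≤ 1 / ((m₁:ℝ) + 1) :=
          one_div_le_one_div_of_le (by positivity) (by linarith)
        linarith
    have hlim := tendsto_measure_iInter_atTop
      (fun m => (hSbadmeas m).nullMeasurableSet) hanti ⟨0, measure_ne_top ρ _⟩
    rw [hinter, measure_empty] at hlim
    exact hlim
  -- Step E : for every m, eventual CDF comparison and trimmed moment chain
  set Tm : ℕ → ℕ → ℝ := fun m k => (‖u k‖ / (2 * ((m:ℝ) + 1)) - ((m:ℝ) + 1)) ^ 2 - 1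
    with hTmdef
  have hsk_tendsto : ∀ m : ℕ, Tendsto (fun k => ‖u k‖ / (2 * ((m:ℝ) + 1)) - ((m:ℝ) + 1))
      atTop atTop := by
    intro m
    have h1' : Tendsto (fun k => ‖u k‖ / (2 * ((m:ℝ) + 1))) atTop atTop :=
      hnorm.atTop_div_const (by positivity)
    have h2' := tendsto_atTop_add_const_right atTop (-(((m:ℝ) + 1))) h1'
    exact h2'.congr fun k => by ring
  have hTm_tendsto : ∀ m, Tendsto (Tm m) atTop atTop := by
    intro m
    have hsq : Tendsto (fun k => (‖u k‖ / (2 * ((m:ℝ) + 1)) - ((m:ℝ) + 1)) ^ 2)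
        atTop atTop := by
      apply tendsto_atTop_mono' atTop ?_ (hsk_tendsto m)
      filter_upwards [(hsk_tendsto m).eventually_ge_atTop 1] with k hk
      nlinarith
    have h2' := tendsto_atTop_add_const_right atTop (-1 : ℝ) hsq
    refine h2'.congr fun k => ?_
    simp only [hTmdef]
    ring
  have hkey : ∀ m, ∀ᶠ k in atTop, ∀ t ∈ Ioc (0:ℝ) (min (j k) (Tm m k)),
      Fcdf ρ (u k) t ≤ Fcdf ρH (u k) t + η m := by
    intro m
    have hev1 : ∀ᶠ k in atTop, ‖(‖u k‖⁻¹ • u k) - d‖ ≤ 1 / (2 * ((m:ℝ) + 1) ^ 2) := by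
      have hpos : (0:ℝ) < 1 / (2 * ((m:ℝ) + 1) ^ 2) := by positivity
      filter_upwards [hdk.eventually (Metric.ball_mem_nhds d hpos)] with k hk
      rw [dist_eq_norm] at hk
      exact hk.le

    have hev2 : ∀ᶠ k in atTop, 0 ≤ ‖u k‖ / (2 * ((m:ℝ) + 1)) - ((m:ℝ) + 1) :=
      (hsk_tendsto m).eventually_ge_atTop 0
    filter_upwards [hev1, hev2] with k hk1 hk2
    intro t ht
    -- split the measure across the hyperplane
    set S : Set (Om q) := {ω : Om q | (resP ω (u k)) ^ 2 ≤ t} with hSdef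
    have hSmeas : MeasurableSet S := measurableSet_resSq_le (u k) t
    have hsplit : ρ (S ∩ Hset) + ρ (S \ Hset) = ρ S := measure_inter_add_diff S hHmeas
    have hrestrict : Fcdf ρH (u k) t = ρ (S ∩ Hset) := by
      rw [hρHdef]
      exact Measure.restrict_apply hSmeas
    have hdiff : ρ (S \ Hset) ≤ η m := by
      apply measure_mono
      intro ω hω
      refine ⟨hω.2, ?_⟩
      intro hoff
      obtain ⟨hω1, hω2, hω3⟩ := hoff
      have hkey' := key_sep (h1le k) hk1 hω1 hω2 hω3 hk2
      have htT : t ≤ Tm m k := le_trans ht.2 (min_le_right _ _)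
      have : (resP ω (u k)) ^ 2 ≤ t := hω.1
      rw [hTmdef] at htT
      simp only at htT
      nlinarith [hkey']
    calc Fcdf ρ (u k) t = ρ S := rfl
      _ = ρ (S ∩ Hset) + ρ (S \ Hset) := hsplit.symm
      _ ≤ Fcdf ρH (u k) t + η m := by
          rw [hrestrict]
          exact add_le_add le_rfl hdiff
  have hchain : ∀ m, ∀ᶠ k in atTop,
      trimCE ρH (lam k - η m) (u k) (min (j k) (Tm m k)) ≤ trimCE ρ (lam k) (u k) (j k) := by
    intro m
    filter_upwards [hkey m] with k hk
    have step1 : trimCE ρH (lam k - η m) (u k) (min (j k) (Tm m k))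
        ≤ trimCE ρ (lam k) (u k) (min (j k) (Tm m k)) := by
      apply setLIntegral_mono (measurable_const.sub (measurable_Fcdf ρ (u k)))
      intro t ht
      have hF := hk t ht
      calc (lam k - η m) - Fcdf ρH (u k) t = lam k - (η m + Fcdf ρH (u k) t) := by
            rw [tsub_tsub]
        _ ≤ lam k - Fcdf ρ (u k) t := by
            apply tsub_le_tsub_left
            rw [add_comm]
            exact hF
    refine le_trans step1 ?_
    exact lintegral_mono' (Measure.restrict_mono
      (Ioc_subset_Ioc_right (min_le_left _ _)) le_rfl) le_rfl
  -- Step F : split on whether the hyperplane population carries enough mass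
  by_cases hHbig : al ≤ ρH univ
  · -- CASE (a) : apply the inductive hypothesis twice
    have hexist : ∀ᶠ m in atTop, ∃ γm, trimE ρH (al - η m) γm ≤ b := by
      filter_upwards [hη0.eventually (eventually_lt_nhds h0)] with m hm
      have hminj : Tendsto (fun k => min (j k) (Tm m k)) atTop atTop := by
        rw [Filter.tendsto_atTop]
        intro C
        filter_upwards [hj.eventually_ge_atTop C, (hTm_tendsto m).eventually_ge_atTop C]
          with k hk1 hk2
        exact le_min hk1 hk2
      apply IH ρH hdimH (fun k => lam k - η m) bseq u (fun k => min (j k) (Tm m k))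
        (al - η m) b (tsub_pos_iff_lt.mpr hm) (le_trans tsub_le_self hHbig)
        (ENNReal.Tendsto.sub hlam tendsto_const_nhds (Or.inl halne)) hminj hb
      filter_upwards [hchain m, hle] with k hk1 hk2
      exact le_trans hk1 hk2
    obtain ⟨M, hM⟩ := eventually_atTop.mp hexist
    have hsel : ∀ m : ℕ, ∃ γm, trimE ρH (al - η (m + M)) γm ≤ b :=
      fun m => hM (m + M) (Nat.le_add_left M m)
    choose γs hγs using hsel
    have hlam'' : Tendsto (fun m => al - η (m + M)) atTop (𝓝 al) := by
      have := ENNReal.Tendsto.sub (tendsto_const_nhds : Tendsto (fun _ : ℕ => al) atTop (𝓝 al))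
        (hη0.comp (tendsto_add_atTop_nat M)) (Or.inl halne)
      simpa using this
    obtain ⟨γstar, hγstar⟩ := IH ρH hdimH (fun m => al - η (m + M)) (fun _ => b) γs
      (fun m => (m:ℝ)) al b h0 hHbig hlam'' tendsto_natCast_atTop_atTop tendsto_const_nhds
      (Eventually.of_forall fun m => le_trans
        (trimCE_le_trimE ρH (al - η (m + M)) (γs m) m) (hγs m))
    exact ⟨γstar, le_trans (trimE_anti_measure Measure.restrict_le_self al γstar) hγstar⟩
  · -- CASE (b) : contradiction, the trimmed moments blow up
    exfalso
    push_neg at hHbig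
    have hΔpos : 0 < al - ρH univ := tsub_pos_iff_lt.mpr hHbig
    obtain ⟨m₁, hm₁⟩ := (hη0.eventually (eventually_lt_nhds hΔpos)).exists
    set cinf : ℝ≥0∞ := al - (ρH univ + η m₁) with hcinfdef
    have hcinfpos : 0 < cinf := by
      rw [hcinfdef, tsub_pos_iff_lt]
      calc ρH univ + η m₁ < ρH univ + (al - ρH univ) := by
            exact ENNReal.add_lt_add_left (measure_ne_top ρH univ) hm₁
        _ = al := add_tsub_cancel_of_le hHbig.le
    have hcinftop : cinf ≠ ⊤ := by
      apply ne_top_of_le_ne_top halne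
      exact tsub_le_self
    set c : ℝ≥0∞ := cinf / 2 with hcdef
    have hc0 : c ≠ 0 := (ENNReal.half_pos hcinfpos.ne').ne'
    have hctop : c ≠ ⊤ := by
      apply ne_top_of_le_ne_top hcinftop
      exact le_trans (ENNReal.half_lt_self hcinfpos.ne' hcinftop).le le_rfl
    have hchalf : c < cinf := ENNReal.half_lt_self hcinfpos.ne' hcinftop
    have hck : Tendsto (fun k => lam k - (ρH univ + η m₁)) atTop (𝓝 cinf) :=
      ENNReal.Tendsto.sub hlam tendsto_const_nhds (Or.inl halne)
    have hev_c : ∀ᶠ k in atTop, c < lam k - (ρH univ + η m₁) :=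
      hck.eventually (eventually_gt_nhds hchalf)
    set K : ℝ := ((b + 1) / c).toReal with hKdef
    have hofK : ENNReal.ofReal K = (b + 1) / c := by
      rw [hKdef]
      exact ENNReal.ofReal_toReal (ENNReal.div_lt_top (by simp [hbtop]) hc0).ne
    have hcK : c * ENNReal.ofReal K = b + 1 := by
      rw [hofK]
      exact ENNReal.mul_div_cancel hc0 hctop
    have hminj : Tendsto (fun k => min (j k) (Tm m₁ k)) atTop atTop := by
      rw [Filter.tendsto_atTop]
      intro C
      filter_upwards [hj.eventually_ge_atTop C, (hTm_tendsto m₁).eventually_ge_atTop C]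
        with k hk1 hk2
      exact le_min hk1 hk2
    have hfinal : ∀ᶠ k in (atTop : Filter ℕ), False := by
      filter_upwards [hkey m₁, hev_c, hle, hminj.eventually_ge_atTop K,
        hb.eventually (eventually_lt_nhds (ENNReal.lt_add_right hbtop one_ne_zero))]
        with k hk1 hk2 hk3 hk4 hk5
      have hlower : b + 1 ≤ trimCE ρ (lam k) (u k) (j k) := by
        have hstep1 : b + 1 ≤ c * ENNReal.ofReal (min (j k) (Tm m₁ k)) := by
          rw [← hcK]
          exact mul_le_mul_right (ENNReal.ofReal_le_ofReal hk4) c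
        have hstep2 : c * ENNReal.ofReal (min (j k) (Tm m₁ k))
            = ∫⁻ _ in Ioc (0:ℝ) (min (j k) (Tm m₁ k)), c ∂volume := by
          rw [setLIntegral_const, Real.volume_Ioc, sub_zero]
        have hstep3 : (∫⁻ _ in Ioc (0:ℝ) (min (j k) (Tm m₁ k)), c ∂volume)
            ≤ trimCE ρ (lam k) (u k) (min (j k) (Tm m₁ k)) := by
          apply setLIntegral_mono (measurable_const.sub (measurable_Fcdf ρ (u k)))
          intro t ht
          have hF : Fcdf ρ (u k) t ≤ ρH univ + η m₁ := by
            calc Fcdf ρ (u k) t ≤ Fcdf ρH (u k) t + η m₁ := hk1 t ht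
              _ ≤ ρH univ + η m₁ := add_le_add (Fcdf_le_univ ρH (u k) t) le_rfl
          calc c ≤ lam k - (ρH univ + η m₁) := hk2.le
            _ ≤ lam k - Fcdf ρ (u k) t := tsub_le_tsub_left hF _
        have hstep4 : trimCE ρ (lam k) (u k) (min (j k) (Tm m₁ k))
            ≤ trimCE ρ (lam k) (u k) (j k) :=
          lintegral_mono' (Measure.restrict_mono
            (Ioc_subset_Ioc_right (min_le_left _ _)) le_rfl) le_rfl
        exact le_trans hstep1 (le_trans (le_of_eq hstep2)
          (le_trans hstep3 hstep4))
      have : b + 1 ≤ bseq k := le_trans hlower hk3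
      exact absurd (lt_of_le_of_lt this hk5) (lt_irrefl _)
    exact hfinal.exists.elim fun _ hf => hf

end LTSAux

namespace LTSAux

variable {q : ℕ}

/-- The main induction: `Bst` holds for every finite measure, by induction on the codimension
of the degenerate subspace. -/
theorem mainB : ∀ (n : ℕ) (ρ : Measure (Om q)), ∀ (_ : IsFiniteMeasure ρ),
    q + 1 ≤ n + Module.finrank ℝ (Vsub ρ) → Bst ρ := by
  intro n
  induction n with
  | zero =>
    intro ρ instρ hdim
    intro lam bseq β j al b h0 h1 hlam hj hb hle
    have hfin : Module.finrank ℝ (Par q) = q + 1 := Module.finrank_fin_fun ℝ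
    have hVtop : Vsub ρ = ⊤ := by
      apply Submodule.eq_top_of_finrank_eq
      apply le_antisymm (Submodule.finrank_le _)
      rw [hfin]
      simpa using hdim
    have hle' : ∀ᶠ k in atTop, trimCE ρ (lam k) (0 : Par q) (j k) ≤ bseq k := by
      filter_upwards [hle] with k hk
      rwa [trimCE_invariant ρ (lam k) (j k)
        (show β k - 0 ∈ Vsub ρ by rw [hVtop]; trivial)] at hk
    exact ⟨0, fatou_trim ρ hlam tendsto_const_nhds hj hb hle'⟩
  | succ n IH =>
    intro ρ instρ hdim
    intro lam bseq β j al b h0 h1 hlam hj hb hle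
    by_cases hbtop : b = ⊤
    · exact ⟨0, hbtop ▸ le_top⟩
    obtain ⟨U, hUV⟩ := Submodule.exists_isCompl (Vsub ρ)
    have hdecomp : ∀ k, ∃ uu, uu ∈ U ∧ β k - uu ∈ Vsub ρ := by
      intro k
      have hmem : β k ∈ Vsub ρ ⊔ U := by
        rw [hUV.sup_eq_top]
        trivial
      obtain ⟨v, hv, uu, huu, heq⟩ := Submodule.mem_sup.mp hmem
      exact ⟨uu, huu, by rw [← heq]; simpa using hv⟩
    choose u humem huV using hdecomp
    have hle' : ∀ᶠ k in atTop, trimCE ρ (lam k) (u k) (j k) ≤ bseq k := by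
      filter_upwards [hle] with k hk
      rwa [trimCE_invariant ρ (lam k) (j k) (huV k)] at hk
    by_cases hbound : ∃ C : ℝ, ∃ᶠ k in atTop, ‖u k‖ ≤ C
    · obtain ⟨C, hC⟩ := hbound
      exact bounded_case ρ hlam hj hb hle' hC
    · push_neg at hbound
      have hnorm : Tendsto (fun k => ‖u k‖) atTop atTop := by
        rw [Filter.tendsto_atTop]
        intro C
        have hnot := hbound C
        filter_upwards [hnot] with k hk
        exact hk.le
      exact escape_case n (fun ρ' hinst hd => IH ρ' hinst hd) ρ hdim hUV humem
        h0 h1 hlam hj hb hbtop hle' hnorm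

/-- Existence of a minimizer of the trimmed moment, for any finite measure and level. -/
theorem trim_min_exists (ρ : Measure (Om q)) [instρ : IsFiniteMeasure ρ] {al : ℝ≥0∞}
    (h0 : 0 < al) (h1 : al ≤ ρ univ) :
    ∃ γ, ∀ β, trimE ρ al γ ≤ trimE ρ al β :=
  AofB ρ (mainB (q + 1) ρ instρ (by omega)) h0 h1

end LTSAux

namespace LTSAux

variable {q : ℕ}

lemma map_Iic_eq_Fcdf (μ' : Measure (Om q)) (β : Par q) (t : ℝ) :
    (μ'.map fun z' => (resP z' β) ^ 2) (Set.Iic t) = Fcdf μ' β t := by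
  rw [Measure.map_apply (measurable_resP_sq β) measurableSet_Iic]
  rfl

/-- Under the no-atom condition at the quantile, the CDF at the `qLTS` quantile is exactly `a`. -/
lemma Fcdf_qLTS_eq (μ' : Measure (Om q)) [IsProbabilityMeasure μ'] {a : ℝ} (β : Par q)
    (ha0 : 0 < a) (ha1 : a < 1)
    (hatom : μ' {ω | (resP ω β) ^ 2 = qLTS μ' β a} = 0) :
    Fcdf μ' β (qLTS μ' β a) = ENNReal.ofReal a := by
  set T : ℝ := qLTS μ' β a with hTdef
  set S : Set ℝ := {t : ℝ | a ≤ ((μ'.map fun z' => (resP z' β) ^ 2) (Set.Iic t)).toReal}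
    with hSdef
  have hSmem : ∀ t : ℝ, t ∈ S ↔ ENNReal.ofReal a ≤ Fcdf μ' β t := by
    intro t
    rw [hSdef, Set.mem_setOf_eq, map_Iic_eq_Fcdf]
    exact (ENNReal.ofReal_le_iff_le_toReal (Fcdf_ne_top μ' β t)).symm
  -- nonempty
  have hSne : S.Nonempty := by
    have hmono : Monotone (fun n : ℕ => {ω : Om q | (resP ω β) ^ 2 ≤ (n:ℝ)}) := by
      intro m n hmn ω hω
      simp only [Set.mem_setOf_eq] at hω ⊢
      have : (m:ℝ) ≤ (n:ℝ) := Nat.cast_le.mpr hmn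
      linarith
    have hunion : ⋃ n : ℕ, {ω : Om q | (resP ω β) ^ 2 ≤ (n:ℝ)} = univ := by
      ext ω
      simp only [Set.mem_iUnion, Set.mem_setOf_eq, Set.mem_univ, iff_true]
      obtain ⟨n, hn⟩ := exists_nat_ge ((resP ω β) ^ 2)
      exact ⟨n, hn⟩
    have hlim : Tendsto (fun n : ℕ => Fcdf μ' β n) atTop (𝓝 (μ' univ)) := by
      have := tendsto_measure_iUnion_atTop (μ := μ')
        (s := fun n : ℕ => {ω : Om q | (resP ω β) ^ 2 ≤ (n:ℝ)}) hmono
      rwa [hunion] at this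
    rw [measure_univ] at hlim
    have hlt : ENNReal.ofReal a < 1 := ENNReal.ofReal_lt_one.mpr ha1
    obtain ⟨n, hn⟩ := (hlim.eventually (eventually_gt_nhds hlt)).exists
    exact ⟨n, (hSmem n).mpr hn.le⟩
  -- bounded below by 0
  have hbdd : BddBelow S := by
    refine ⟨0, fun t ht => ?_⟩
    by_contra hneg
    push_neg at hneg
    have hempty : {ω : Om q | (resP ω β) ^ 2 ≤ t} = ∅ := by
      ext ω
      simp only [Set.mem_setOf_eq, Set.mem_empty_iff_false, iff_false, not_le]
      exact lt_of_lt_of_le hneg (sq_nonneg _)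
    have : Fcdf μ' β t = 0 := by
      rw [Fcdf, hempty, measure_empty]
    rw [hSmem t, this] at ht
    simp only [nonpos_iff_eq_zero, ENNReal.ofReal_eq_zero] at ht
    linarith
  have hT : T = sInf S := rfl
  -- lower bound : ofReal a ≤ Fcdf T
  have hge : ENNReal.ofReal a ≤ Fcdf μ' β T := by
    have happrox : ∀ n : ℕ, ENNReal.ofReal a ≤ Fcdf μ' β (T + 1/((n:ℝ)+1)) := by
      intro n
      have hlt : sInf S < T + 1/((n:ℝ)+1) := by
        rw [← hT]
        have : (0:ℝ) < 1/((n:ℝ)+1) := by positivity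
        linarith
      obtain ⟨t, htS, htlt⟩ := (csInf_lt_iff hbdd hSne).mp hlt
      exact le_trans ((hSmem t).mp htS) (Fcdf_mono μ' β htlt.le)
    have hanti : Antitone (fun n : ℕ => {ω : Om q | (resP ω β) ^ 2 ≤ T + 1/((n:ℝ)+1)}) := by
      intro m n hmn ω hω
      simp only [Set.mem_setOf_eq] at hω ⊢
      have hcast : ((m:ℝ) + 1) ≤ ((n:ℝ) + 1) := by
        have := (Nat.cast_le (α := ℝ)).mpr hmn
        linarith
      have hdiv : 1/((n:ℝ)+1) ≤ 1/((m:ℝ)+1) := one_div_le_one_div_of_le (by positivity) hcast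
      linarith
    have hinter : ⋂ n : ℕ, {ω : Om q | (resP ω β) ^ 2 ≤ T + 1/((n:ℝ)+1)}
        = {ω : Om q | (resP ω β) ^ 2 ≤ T} := by
      ext ω
      simp only [Set.mem_iInter, Set.mem_setOf_eq]
      constructor
      · intro h
        by_contra hcon
        push_neg at hcon
        obtain ⟨n, hn⟩ := exists_nat_one_div_lt (show (0:ℝ) < (resP ω β)^2 - T by linarith)
        have := h n
        linarith
      · intro h n
        have : (0:ℝ) < 1/((n:ℝ)+1) := by positivity
        linarith
    have hlim := tendsto_measure_iInter_atTop (μ := μ')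
      (fun n => (measurableSet_resSq_le β _).nullMeasurableSet) hanti
      ⟨0, measure_ne_top μ' _⟩
    rw [hinter] at hlim
    exact ge_of_tendsto hlim (Eventually.of_forall happrox)
  -- upper bound : Fcdf T ≤ ofReal a
  have hle : Fcdf μ' β T ≤ ENNReal.ofReal a := by
    have hlttop : ∀ t : ℝ, t < T → Fcdf μ' β t < ENNReal.ofReal a := by
      intro t htlt
      have hnotmem : t ∉ S := fun hmem => absurd (csInf_le hbdd hmem) (not_le.mpr (hT ▸ htlt))
      rw [hSmem t] at hnotmem
      exact lt_of_not_ge hnotmem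
    have hmono : Monotone (fun n : ℕ => {ω : Om q | (resP ω β) ^ 2 ≤ T - 1/((n:ℝ)+1)}) := by
      intro m n hmn ω hω
      simp only [Set.mem_setOf_eq] at hω ⊢
      have hcast : ((m:ℝ) + 1) ≤ ((n:ℝ) + 1) := by
        have := (Nat.cast_le (α := ℝ)).mpr hmn
        linarith
      have hdiv : 1/((n:ℝ)+1) ≤ 1/((m:ℝ)+1) := one_div_le_one_div_of_le (by positivity) hcast
      linarith
    have hunion : ⋃ n : ℕ, {ω : Om q | (resP ω β) ^ 2 ≤ T - 1/((n:ℝ)+1)}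
        = {ω : Om q | (resP ω β) ^ 2 < T} := by
      ext ω
      simp only [Set.mem_iUnion, Set.mem_setOf_eq]
      constructor
      · rintro ⟨n, hn⟩
        have : (0:ℝ) < 1/((n:ℝ)+1) := by positivity
        linarith
      · intro h
        obtain ⟨n, hn⟩ := exists_nat_one_div_lt (show (0:ℝ) < T - (resP ω β)^2 by linarith)
        exact ⟨n, by linarith⟩
    have hlim := tendsto_measure_iUnion_atTop (μ := μ')
      (s := fun n : ℕ => {ω : Om q | (resP ω β) ^ 2 ≤ T - 1/((n:ℝ)+1)}) hmono
    rw [hunion] at hlim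
    have hIio : μ' {ω : Om q | (resP ω β) ^ 2 < T} ≤ ENNReal.ofReal a := by
      apply le_of_tendsto hlim
      refine Eventually.of_forall fun n => (hlttop (T - 1/((n:ℝ)+1)) ?_).le
      have : (0:ℝ) < 1/((n:ℝ)+1) := by positivity
      linarith
    have hsplit : Fcdf μ' β T = μ' {ω : Om q | (resP ω β) ^ 2 < T}
        + μ' {ω : Om q | (resP ω β) ^ 2 = T} := by
      rw [Fcdf]
      rw [show {ω : Om q | (resP ω β) ^ 2 ≤ T}
          = {ω : Om q | (resP ω β) ^ 2 < T} ∪ {ω : Om q | (resP ω β) ^ 2 = T} by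
        ext ω; simp only [Set.mem_union, Set.mem_setOf_eq]; exact le_iff_lt_or_eq]
      apply measure_union
      · exact Set.disjoint_left.mpr fun ω h1' h2' => absurd h2' (ne_of_lt h1')
      · exact (measurable_resP_sq β) (measurableSet_singleton T)
    rw [hsplit, hatom, add_zero]
    exact hIio
  exact le_antisymm hle hge

end LTSAux

namespace LTSAux

variable {q : ℕ}

/-- Layer-cake bridge: the LTS objective equals the (finite) trimmed moment. -/
lemma Opop_eq_trim (μ' : Measure (Om q)) [IsProbabilityMeasure μ'] {a : ℝ} (β : Par q)
    (ha0 : 0 < a) (ha1 : a < 1)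
    (hatom : μ' {ω | (resP ω β) ^ 2 = qLTS μ' β a} = 0) :
    Opop μ' a β = (trimE μ' (ENNReal.ofReal a) β).toReal
      ∧ trimE μ' (ENNReal.ofReal a) β ≠ ⊤ := by
  set T : ℝ := qLTS μ' β a with hTdef
  have hFq : Fcdf μ' β T = ENNReal.ofReal a := Fcdf_qLTS_eq μ' β ha0 ha1 hatom
  set f : Om q → ℝ := fun ω => if (resP ω β) ^ 2 ≤ T then (resP ω β) ^ 2 else 0 with hfdef
  have hfmeas : Measurable f :=
    Measurable.ite (measurableSet_resSq_le β T) (measurable_resP_sq β) measurable_const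
  have hfnn : 0 ≤ᵐ[μ'] f := ae_of_all _ fun ω => by
    rw [hfdef]
    dsimp only
    split
    · exact sq_nonneg _
    · exact le_refl 0
  have hstep1 : Opop μ' a β = (∫⁻ ω, ENNReal.ofReal (f ω) ∂μ').toReal := by
    rw [Opop]
    exact integral_eq_lintegral_of_nonneg_ae hfnn hfmeas.aestronglyMeasurable
  have hstep2 : ∫⁻ ω, ENNReal.ofReal (f ω) ∂μ' = ∫⁻ t in Ioi (0:ℝ), μ' {ω | t < f ω} :=
    lintegral_eq_lintegral_meas_lt μ' hfnn hfmeas.aemeasurable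
  have hsets : ∀ t : ℝ, 0 < t → {ω : Om q | t < f ω}
      = {ω : Om q | (resP ω β) ^ 2 ≤ T} \ {ω : Om q | (resP ω β) ^ 2 ≤ t} := by
    intro t ht
    ext ω
    simp only [hfdef, Set.mem_setOf_eq, Set.mem_diff]
    constructor
    · intro hlt
      by_cases h : (resP ω β) ^ 2 ≤ T
      · rw [if_pos h] at hlt
        exact ⟨h, not_le.mpr hlt⟩
      · rw [if_neg h] at hlt
        linarith
    · rintro ⟨h1, h2⟩
      rw [if_pos h1]
      exact not_le.mp h2
  have hstep3 : ∀ t ∈ Ioi (0:ℝ), μ' {ω : Om q | t < f ω} = ENNReal.ofReal a - Fcdf μ' β t := by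
    intro t ht
    rw [hsets t (Set.mem_Ioi.mp ht)]
    by_cases hcase : t ≤ T
    · have hd := measure_diff
        (show {ω : Om q | (resP ω β) ^ 2 ≤ t} ⊆ {ω : Om q | (resP ω β) ^ 2 ≤ T} from
          fun ω hω => le_trans hω hcase)
        ((measurableSet_resSq_le β t).nullMeasurableSet) (measure_ne_top μ' _)
      rw [hd, ← hFq]
      rfl
    · push_neg at hcase
      have h1 : {ω : Om q | (resP ω β) ^ 2 ≤ T} \ {ω : Om q | (resP ω β) ^ 2 ≤ t} = ∅ :=
        diff_eq_empty.mpr fun ω hω => le_trans hω hcase.le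
      rw [h1, measure_empty]
      symm
      rw [tsub_eq_zero_iff_le, ← hFq]
      exact Fcdf_mono μ' β hcase.le
  have htrim : (∫⁻ t in Ioi (0:ℝ), μ' {ω : Om q | t < f ω})
      = trimE μ' (ENNReal.ofReal a) β := by
    apply setLIntegral_congr_fun measurableSet_Ioi
    exact fun t ht => hstep3 t ht
  have hfin : trimE μ' (ENNReal.ofReal a) β ≠ ⊤ := by
    have hbound : trimE μ' (ENNReal.ofReal a) β
        ≤ ∫⁻ t in Ioi (0:ℝ), (Ioc (0:ℝ) T).indicator (fun _ => ENNReal.ofReal a) t ∂volume := by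
      apply setLIntegral_mono' measurableSet_Ioi
      intro t ht
      by_cases hcase : t ≤ T
      · rw [indicator_of_mem (Set.mem_Ioc.mpr ⟨Set.mem_Ioi.mp ht, hcase⟩)]
        exact tsub_le_self
      · rw [indicator_of_notMem (fun hmem => hcase (Set.mem_Ioc.mp hmem).2)]
        have hge : ENNReal.ofReal a ≤ Fcdf μ' β t :=
          hFq ▸ Fcdf_mono μ' β (not_le.mp hcase).le
        rw [tsub_eq_zero_iff_le.mpr hge]
    have hind : (∫⁻ t in Ioi (0:ℝ),
          (Ioc (0:ℝ) T).indicator (fun _ => ENNReal.ofReal a) t ∂volume)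
        = ENNReal.ofReal a * (volume.restrict (Ioi (0:ℝ))) (Ioc (0:ℝ) T) := by
      rw [lintegral_indicator measurableSet_Ioc, setLIntegral_const]
    have hvol : (volume.restrict (Ioi (0:ℝ))) (Ioc (0:ℝ) T) ≠ ⊤ := by
      apply ne_top_of_le_ne_top _ (Measure.restrict_le_self _)
      rw [Real.volume_Ioc]
      exact ENNReal.ofReal_ne_top
    apply ne_top_of_le_ne_top _ (le_trans hbound (le_of_eq hind))
    exact ENNReal.mul_ne_top ENNReal.ofReal_ne_top hvol
  exact ⟨by rw [hstep1, hstep2, htrim], hfin⟩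

/-- A pushforward with a Lebesgue density has no atoms. -/
lemma atom_zero_of_density {μ' : Measure (Om q)} {β : Par q}
    (h : HasPositiveDensity (μ'.map fun z' => (resP z' β) ^ 2)) (T : ℝ) :
    μ' {ω | (resP ω β) ^ 2 = T} = 0 := by
  obtain ⟨f, hf, -⟩ := h
  have hmap : (μ'.map fun z' => (resP z' β) ^ 2) {T} = 0 := by
    rw [hf, withDensity_apply _ (measurableSet_singleton T)]
    exact setLIntegral_measure_zero _ _ (measure_singleton T)
  rw [Measure.map_apply (measurable_resP_sq β) (measurableSet_singleton T)] at hmap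
  rwa [show (fun z' : Om q => (resP z' β) ^ 2) ⁻¹' {T} = {ω : Om q | (resP ω β) ^ 2 = T} by
    ext ω; simp] at hmap

lemma contam_isProbability (μ : Measure (Om q)) [IsProbabilityMeasure μ] {ε : ℝ}
    (hε0 : 0 ≤ ε) (hε1 : ε ≤ 1) (z : Om q) : IsProbabilityMeasure (contam μ ε z) := by
  constructor
  rw [contam]
  simp only [Measure.coe_add, Pi.add_apply, Measure.smul_apply, smul_eq_mul, measure_univ,
    mul_one]
  rw [← ENNReal.ofReal_add (by linarith) hε0, sub_add_cancel, ENNReal.ofReal_one]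

/-- Existence of a minimizer of the LTS objective for a probability measure, given
no atom at the quantile for every parameter. -/
lemma Opop_min_exists (μ' : Measure (Om q)) [IsProbabilityMeasure μ'] {a : ℝ}
    (ha0 : 0 < a) (ha1 : a < 1)
    (hatom : ∀ β : Par q, μ' {ω | (resP ω β) ^ 2 = qLTS μ' β a} = 0) :
    ∃ βl : Par q, ∀ β, Opop μ' a βl ≤ Opop μ' a β := by
  have h0 : (0:ℝ≥0∞) < ENNReal.ofReal a := ENNReal.ofReal_pos.mpr ha0
  have h1 : ENNReal.ofReal a ≤ μ' univ := by
    rw [measure_univ]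
    exact ENNReal.ofReal_le_one.mpr ha1.le
  obtain ⟨γ, hγ⟩ := trim_min_exists μ' h0 h1
  refine ⟨γ, fun β => ?_⟩
  obtain ⟨heqγ, hfinγ⟩ := Opop_eq_trim μ' γ ha0 ha1 (hatom γ)
  obtain ⟨heqβ, hfinβ⟩ := Opop_eq_trim μ' β ha0 ha1 (hatom β)
  rw [heqγ, heqβ]
  exact (ENNReal.toReal_le_toReal hfinγ hfinβ).mpr (hγ β)

end LTSAux

/-- Theorem 2.3 (i): existence of the LTS minimizers `β_lts(F, α)` and
`β_lts(F_ε(z), α)` under positive density of `W(β)`, continuity in `β` of the contaminated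
quantile `q_ε(z, β, α)`, and no point mass at the quantile. -/
theorem stmt_10 {q : ℕ} (μ : Measure ((Fin q → ℝ) × ℝ)) [IsProbabilityMeasure μ]
    (a c : ℝ) (hc : 1 / 2 < c ∧ c < 1) (ha : a ∈ Set.Icc (1 / 2) c)
    (ε : ℝ) (hε : ε ∈ Set.Ioo (0 : ℝ) (1 / 2)) (z : (Fin q → ℝ) × ℝ)
    (hdens : ∀ β : Fin (q + 1) → ℝ, HasPositiveDensity (μ.map fun z' => (resP z' β) ^ 2))
    (hqc : Continuous fun β : Fin (q + 1) → ℝ => qLTS (contam μ ε z) β a)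
    (htie : ∀ β : Fin (q + 1) → ℝ,
      contam μ ε z {u | (resP u β) ^ 2 = qLTS (contam μ ε z) β a} = 0) :
    (∃ βl : Fin (q + 1) → ℝ, ∀ β, Opop μ a βl ≤ Opop μ a β) ∧
    (∃ βl : Fin (q + 1) → ℝ, ∀ β, Opop (contam μ ε z) a βl ≤ Opop (contam μ ε z) a β) := by
  have ha0 : 0 < a := lt_of_lt_of_le (by norm_num) ha.1
  have ha1 : a < 1 := lt_of_le_of_lt ha.2 hc.2
  constructor
  · exact LTSAux.Opop_min_exists μ ha0 ha1
      (fun β => LTSAux.atom_zero_of_density (hdens β) _)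
  · haveI : IsProbabilityMeasure (contam μ ε z) :=
      LTSAux.contam_isProbability μ hε.1.le (by linarith [hε.2] : ε ≤ 1) z
    exact LTSAux.Opop_min_exists (contam μ ε z) ha0 ha1 htie
end
end

section
/- Assume (x', y) follows a unimodal spherical elliptical distribution E(g; 0, I_{p×p}) whose covariance matrix is I_{p×p}, the model y = w'β_0 + e holds with e ~ N(0, σ²) independent of x, and β_lts = β_0 = 0. Then (1) P∇ = 0 and P(∇∇') = 8σ²C · I_{p×p}, where C = Φ(c) - 1/2 - c e^{-c²/2}/√(2π), c = sqrt(F^{-1}_{χ²(1)}(α)), and Φ is the standard normal CDF; and (2) V = 2C₁ · I_{p×p} with C₁ = 2Φ(c) - 1. -/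
open MeasureTheory Metric
open scoped ENNReal NNReal Classical

noncomputable section

/-- The standard normal CDF `Φ`. -/
def stdNormCDF (t : ℝ) : ℝ :=
  ((ProbabilityTheory.gaussianReal 0 1) (Set.Iic t)).toReal

/-- The χ²(1) distribution: the law of `Z²` for `Z ~ N(0,1)`. -/
def chiSq1 : Measure ℝ :=
  (ProbabilityTheory.gaussianReal 0 1).map fun t => t ^ 2

/-- `c = √(F⁻¹_{χ²(1)}(α))`. -/
def cCut (a : ℝ) : ℝ := Real.sqrt (quant chiSq1 a)

/-- `C = Φ(c) - 1/2 - c e^{-c²/2} / √(2π)`. -/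
def Cconst (a : ℝ) : ℝ :=
  stdNormCDF (cCut a) - 1 / 2
    - cCut a * Real.exp (-(cCut a) ^ 2 / 2) / Real.sqrt (2 * Real.pi)

/-- `C₁ = 2Φ(c) - 1`. -/
def C1const (a : ℝ) : ℝ := 2 * stdNormCDF (cCut a) - 1

/-- `(x', y)` follows a unimodal spherical elliptical distribution `E(g; 0, I)`:
its density w.r.t. Lebesgue measure is a nonincreasing function `g` of `‖(x', y)‖²`. -/
def IsUnimodalSpherical {q : ℕ} (μ : Measure ((Fin q → ℝ) × ℝ)) : Prop :=
  ∃ g : ℝ → ℝ, AntitoneOn g (Set.Ici 0) ∧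
    μ = (volume : Measure ((Fin q → ℝ) × ℝ)).withDensity
      (fun z => ENNReal.ofReal (g ((∑ j, (z.1 j) ^ 2) + z.2 ^ 2)))

/-- The covariance matrix of `(x', y)` is the identity (with zero means). -/
def IdCov {q : ℕ} (μ : Measure ((Fin q → ℝ) × ℝ)) : Prop :=
  (∀ i, ∫ z, z.1 i ∂μ = 0) ∧ (∫ z, z.2 ∂μ = 0) ∧
    (∀ i j, ∫ z, z.1 i * z.1 j ∂μ = if i = j then (1 : ℝ) else 0) ∧
    (∀ i, ∫ z, z.1 i * z.2 ∂μ = 0) ∧ (∫ z, z.2 ^ 2 ∂μ = 1)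


open Real Set Filter ProbabilityTheory

/-! ### Auxiliary lemmas -/

lemma tendsto_mul_exp_sq_aux {b : ℝ} (hb : 0 < b) :
    Tendsto (fun x : ℝ => x * Real.exp (-b * x ^ 2)) atTop (nhds 0) := by
  have h := (rpow_mul_exp_neg_mul_sq_isLittleO_exp_neg hb 1).isBigO
  have h2 : Tendsto (fun x : ℝ => Real.exp (-(1/2) * x)) atTop (nhds 0) :=
    Real.tendsto_exp_atBot.comp
      (Tendsto.const_mul_atTop_of_neg (by norm_num) tendsto_id)
  have h3 := h.trans_tendsto h2
  apply h3.congr'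
  filter_upwards [eventually_ge_atTop (0:ℝ)] with x hx
  rw [Real.rpow_one]

lemma integral_sq_mul_exp_aux {b : ℝ} (hb : 0 < b) :
    ∫ x : ℝ, x ^ 2 * Real.exp (-b * x ^ 2) = Real.sqrt (π / b) / (2 * b) := by
  have hint2 : Integrable (fun x : ℝ => x ^ 2 * Real.exp (-b * x ^ 2)) := by
    have := integrable_rpow_mul_exp_neg_mul_sq hb (s := 2) (by norm_num)
    simpa [Real.rpow_two] using this
  have hint0 : Integrable (fun x : ℝ => Real.exp (-b * x ^ 2)) := integrable_exp_neg_mul_sq hb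
  set F : ℝ → ℝ := fun x => -(x / (2 * b)) * Real.exp (-b * x ^ 2) with hF
  have hderiv : ∀ x : ℝ, HasDerivAt F
      (x ^ 2 * Real.exp (-b * x ^ 2) - (1 / (2 * b)) * Real.exp (-b * x ^ 2)) x := by
    intro x
    have h1 : HasDerivAt (fun x : ℝ => -(x / (2 * b))) (-(1 / (2 * b))) x := by
      exact ((hasDerivAt_id x).div_const (2*b)).neg
    have h2 : HasDerivAt (fun x : ℝ => Real.exp (-b * x ^ 2))
        (Real.exp (-b * x ^ 2) * (-b * (2 * x))) x := by
      have : HasDerivAt (fun x : ℝ => -b * x ^ 2) (-b * (2 * x)) x := by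
        simpa using (hasDerivAt_pow 2 x).const_mul (-b)
      exact (Real.hasDerivAt_exp _).comp x this
    have := h1.mul h2
    refine this.congr_deriv ?_
    field_simp
    ring
  have hbot : Tendsto F atBot (nhds 0) := by
    have := ((tendsto_mul_exp_sq_aux hb).const_mul (1/(2*b))).comp tendsto_neg_atBot_atTop
    simp only [Function.comp_def] at this
    have heq : ∀ x : ℝ, (1/(2*b)) * (-x * Real.exp (-b * (-x) ^ 2)) = F x := by
      intro x; simp [hF]; ring
    simpa [heq, mul_zero] using this.congr heq
  have htop : Tendsto F atTop (nhds 0) := by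
    have := (tendsto_mul_exp_sq_aux hb).const_mul (-(1/(2*b)))
    have heq : ∀ x : ℝ, (-(1/(2*b))) * (x * Real.exp (-b * x ^ 2)) = F x := by
      intro x; simp [hF]; ring
    simpa [heq, mul_zero] using this.congr heq
  have key := MeasureTheory.integral_of_hasDerivAt_of_tendsto hderiv
    (hint2.sub (hint0.const_mul (1/(2*b)))) hbot htop
  rw [sub_zero] at key
  have := integral_sub hint2 (hint0.const_mul (1/(2*b)))
  rw [this] at key
  rw [MeasureTheory.integral_const_mul, integral_gaussian] at key
  have h2b : (2*b) ≠ 0 := by positivity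
  rw [sub_eq_zero] at key
  rw [key]; ring

lemma integral_gaussianReal_aux {v : ℝ≥0} (hv : v ≠ 0) (g : ℝ → ℝ) :
    ∫ x, g x ∂(gaussianReal 0 v) = ∫ x, gaussianPDFReal 0 v x * g x := by
  rw [gaussianReal_of_var_ne_zero 0 hv]
  have : (gaussianPDF 0 v) = fun x => ((Real.toNNReal (gaussianPDFReal 0 v x) : ℝ≥0) : ℝ≥0∞) := by
    funext x; rw [gaussianPDF]; rfl
  rw [this, integral_withDensity_eq_integral_smul]
  · congr 1; funext x
    rw [NNReal.smul_def, Real.coe_toNNReal _ (gaussianPDFReal_nonneg 0 v x)]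
    rfl
  · exact (measurable_gaussianPDFReal 0 v).real_toNNReal

lemma integral_sq_gaussianReal_aux {v : ℝ≥0} (hv : v ≠ 0) :
    ∫ x, x ^ 2 ∂(gaussianReal 0 v) = v := by
  rw [integral_gaussianReal_aux hv]
  have hv' : (0:ℝ) < v := lt_of_le_of_ne v.coe_nonneg (by exact_mod_cast hv.symm)
  have hb : (0:ℝ) < (2 * (v:ℝ))⁻¹ := by positivity
  have : ∀ x : ℝ, gaussianPDFReal 0 v x * x ^ 2
      = (Real.sqrt (2 * π * v))⁻¹ * (x ^ 2 * Real.exp (-(2*(v:ℝ))⁻¹ * x ^ 2)) := by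
    intro x
    rw [gaussianPDFReal]
    have : -(x - 0) ^ 2 / (2 * (v:ℝ)) = -(2*(v:ℝ))⁻¹ * x ^ 2 := by field_simp; ring
    rw [this]; ring
  simp_rw [this]
  rw [MeasureTheory.integral_const_mul, integral_sq_mul_exp_aux hb]
  have h1 : π / ((2*(v:ℝ))⁻¹) = 2 * π * v := by field_simp
  rw [h1]
  have h2 : Real.sqrt (2*π*v) ≠ 0 := by positivity
  field_simp

/-- The standard normal density. -/
def phi (x : ℝ) : ℝ := (Real.sqrt (2 * π))⁻¹ * Real.exp (-x ^ 2 / 2)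

lemma pdf1_eq_phi : gaussianPDFReal 0 1 = phi := by
  funext x; simp [gaussianPDFReal, phi]

lemma pdf1_int : Integrable (gaussianPDFReal 0 1) := integrable_gaussianPDFReal 0 1

lemma phi_cont : Continuous phi := by
  apply Continuous.mul continuous_const
  exact Real.continuous_exp.comp (by continuity)

lemma phi_even (x : ℝ) : phi (-x) = phi x := by simp [phi]

lemma cdf_eq (t : ℝ) : stdNormCDF t = ∫ x in Iic t, gaussianPDFReal 0 1 x := by
  rw [stdNormCDF, gaussianReal_of_var_ne_zero 0 one_ne_zero,
    withDensity_apply _ measurableSet_Iic]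
  rw [gaussianPDF_def]
  rw [← ofReal_integral_eq_lintegral_ofReal (pdf1_int.restrict)
    (Filter.Eventually.of_forall fun x => gaussianPDFReal_nonneg 0 1 x)]
  rw [ENNReal.toReal_ofReal]
  exact integral_nonneg fun x => gaussianPDFReal_nonneg 0 1 x

lemma pdf1_even (x : ℝ) : gaussianPDFReal 0 1 (-x) = gaussianPDFReal 0 1 x := by
  simp [gaussianPDFReal]

lemma cdf_neg (c : ℝ) : stdNormCDF (-c) = 1 - stdNormCDF c := by
  have h1 : stdNormCDF c = ∫ x in Ioi (-c), gaussianPDFReal 0 1 x := by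
    rw [cdf_eq]
    rw [← integral_comp_neg_Iic c (gaussianPDFReal 0 1)]
    exact setIntegral_congr_fun measurableSet_Iic fun x _ => (pdf1_even x).symm
  have h2 := intervalIntegral.integral_Iic_add_Ioi (b := -c)
    (pdf1_int.integrableOn) (pdf1_int.integrableOn)
  rw [integral_gaussianPDFReal_eq_one 0 one_ne_zero] at h2
  rw [cdf_eq, h1]
  linarith

lemma interval_phi (c : ℝ) :
    ∫ x in (-c)..c, phi x = 2 * stdNormCDF c - 1 := by
  rw [← pdf1_eq_phi,
    ← intervalIntegral.integral_Iic_sub_Iic pdf1_int.integrableOn pdf1_int.integrableOn,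
    ← cdf_eq, ← cdf_eq, cdf_neg]
  ring

lemma hasDerivAt_neg_phi (x : ℝ) : HasDerivAt (fun y => -phi y) (x * phi x) x := by
  have h : HasDerivAt (fun y : ℝ => -y ^ 2 / 2) (-x) x := by
    have := (hasDerivAt_pow 2 x).neg.div_const 2
    refine this.congr_deriv ?_; push_cast; ring
  have h2 := ((Real.hasDerivAt_exp _).comp x h).const_mul (Real.sqrt (2 * π))⁻¹
  have := h2.neg
  refine this.congr_deriv ?_
  simp [phi]; ring

lemma hasDerivAt_xphi (x : ℝ) :
    HasDerivAt (fun y => -(y * phi y)) (x ^ 2 * phi x - phi x) x := by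
  have h := ((hasDerivAt_id x).mul (hasDerivAt_neg_phi x).neg).neg
  have e : (fun y => -(y * phi y)) = -(id * -fun y => -phi y) := by
    funext y; simp only [Pi.neg_apply, Pi.mul_apply, id_eq, neg_neg]
  rw [e]
  refine h.congr_deriv ?_
  simp only [Pi.neg_apply, id_eq, one_mul]; ring

lemma interval_x_phi (c : ℝ) : ∫ x in (-c)..c, x * phi x = 0 := by
  rw [intervalIntegral.integral_eq_sub_of_hasDerivAt (f := fun y => -phi y)
    (fun x _ => hasDerivAt_neg_phi x)
    ((continuous_id.mul phi_cont).intervalIntegrable _ _)]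
  rw [← phi_even c]; ring

lemma interval_sq_phi (c : ℝ) :
    ∫ x in (-c)..c, x ^ 2 * phi x = (∫ x in (-c)..c, phi x) - 2 * c * phi c := by
  have key : ∫ x in (-c)..c, (x ^ 2 * phi x - phi x) = -(c * phi c) - -(-c * phi (-c)) :=
    intervalIntegral.integral_eq_sub_of_hasDerivAt (fun x _ => hasDerivAt_xphi x)
      (((continuous_pow 2).mul phi_cont |>.sub phi_cont).intervalIntegrable _ _)
  rw [intervalIntegral.integral_sub (f := fun x => x ^ 2 * phi x) (g := phi)
    (((continuous_pow 2).mul phi_cont).intervalIntegrable _ _)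
    (phi_cont.intervalIntegrable _ _)] at key
  rw [phi_even] at key
  linarith

lemma sq_le_iff_mem {c x : ℝ} (hc : 0 ≤ c) : x ^ 2 ≤ c ^ 2 ↔ x ∈ Icc (-c) c := by
  rw [sq_le_sq, abs_of_nonneg hc, abs_le]
  exact Iff.rfl

lemma gint {c : ℝ} (hc : 0 ≤ c) (G : ℝ → ℝ) :
    ∫ y, (if y ^ 2 ≤ c ^ 2 then G y else 0) ∂(gaussianReal 0 1)
      = ∫ x in (-c)..c, phi x * G x := by
  rw [integral_gaussianReal_aux one_ne_zero, pdf1_eq_phi]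
  have : ∀ x : ℝ, phi x * (if x ^ 2 ≤ c ^ 2 then G x else 0)
      = Set.indicator (Icc (-c) c) (fun x => phi x * G x) x := by
    intro x
    rw [indicator_apply]
    by_cases h : x ∈ Icc (-c) c
    · rw [if_pos h, if_pos ((sq_le_iff_mem hc).mpr h)]
    · rw [if_neg h, if_neg (fun hh => h ((sq_le_iff_mem hc).mp hh)), mul_zero]
  simp_rw [this]
  rw [integral_indicator measurableSet_Icc, MeasureTheory.integral_Icc_eq_integral_Ioc,
    ← intervalIntegral.integral_of_le (by linarith : -c ≤ c)]

lemma quant_chiSq1_nonneg {a : ℝ} (ha : 1 / 2 ≤ a) : 0 ≤ quant chiSq1 a := by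
  apply Real.sInf_nonneg
  intro t ht
  simp only [mem_setOf_eq] at ht
  by_contra hlt
  push_neg at hlt
  have : chiSq1 (Iic t) = 0 := by
    rw [chiSq1, Measure.map_apply (show Measurable fun t : ℝ => t ^ 2 by fun_prop)
      measurableSet_Iic]
    convert measure_empty (μ := gaussianReal 0 1)
    ext x
    simp only [mem_preimage, mem_Iic, mem_empty_iff_false, iff_false, not_le]
    nlinarith [sq_nonneg x]
  rw [this] at ht
  norm_num at ht
  linarith

/-- Theorem 4.1 (1)–(2): under a unimodal spherical `E(g; 0, I)` distribution for
`(x', y)` with identity covariance, the model `y = w'β₀ + e`, `e ~ N(0, σ²)` independent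
of `x`, and `β_lts = β₀ = 0`: (1) `P∇ = 0` and `P(∇∇') = 8σ²C I`; (2) `V = 2C₁ I`. -/
theorem stmt_18 {q : ℕ} (μ : Measure ((Fin q → ℝ) × ℝ)) [IsProbabilityMeasure μ]
    (a cstar : ℝ) (hc : 1 / 2 < cstar ∧ cstar < 1) (ha : a ∈ Set.Icc (1 / 2) cstar)
    (hsph : IsUnimodalSpherical μ) (hcov : IdCov μ)
    (σ2 : ℝ≥0) (hσ2 : 0 < σ2)
    -- the model `y = w'β₀ + e` with `β₀ = 0` and `e ~ N(0, σ²)` independent of `x`: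
    (hmodel : μ = (μ.map Prod.fst).prod (ProbabilityTheory.gaussianReal 0 σ2))
    -- `β_lts = β₀ = 0`:
    (hβl : ∀ β : Fin (q + 1) → ℝ, Opop μ a 0 ≤ Opop μ a β) :
    -- (1) `P∇ = 0` and `P(∇∇') = 8σ²C I`
    (∀ j : Fin (q + 1),
      (∫ z, (if (resP z 0) ^ 2 ≤ qLTS μ 0 a
        then -2 * resP z 0 * wcons z.1 j else 0) ∂μ) = 0) ∧
    (∀ j j' : Fin (q + 1),
      (∫ z, (if (resP z 0) ^ 2 ≤ qLTS μ 0 a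
          then (-2 * resP z 0 * wcons z.1 j) * (-2 * resP z 0 * wcons z.1 j') else 0) ∂μ)
        = 8 * (σ2 : ℝ) * Cconst a * (if j = j' then 1 else 0)) ∧
    -- (2) `V = 2C₁ I`
    (∀ j j' : Fin (q + 1),
      2 * (∫ z, (if (resP z 0) ^ 2 ≤ qLTS μ 0 a
          then wcons z.1 j * wcons z.1 j' else 0) ∂μ)
        = 2 * C1const a * (if j = j' then 1 else 0)) := by
  obtain ⟨ha1, ha2⟩ := ha
  haveI hνp : IsProbabilityMeasure (μ.map Prod.fst) :=
    Measure.isProbabilityMeasure_map measurable_fst.aemeasurable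
  have hmapsnd : μ.map Prod.snd = ProbabilityTheory.gaussianReal 0 σ2 := by
    conv_lhs => rw [hmodel]
    rw [MeasureTheory.Measure.map_snd_prod]
    simp
  have hσ1 : σ2 = 1 := by
    have h2 : ∫ y, y ^ 2 ∂(μ.map Prod.snd) = ∫ z, z.2 ^ 2 ∂μ :=
      integral_map measurable_snd.aemeasurable (by fun_prop)
    rw [hmapsnd, integral_sq_gaussianReal_aux hσ2.ne', hcov.2.2.2.2] at h2
    exact_mod_cast h2
  subst hσ1
  have hres : ∀ z : (Fin q → ℝ) × ℝ, resP z (0 : Fin (q + 1) → ℝ) = z.2 := by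
    intro z; simp [resP]
  have hc0 : 0 ≤ cCut a := Real.sqrt_nonneg _
  have hQ : qLTS μ 0 a = cCut a ^ 2 := by
    have hmap2 : μ.map (fun z : (Fin q → ℝ) × ℝ => resP z 0 ^ 2) = chiSq1 := by
      have hre : (fun z : (Fin q → ℝ) × ℝ => resP z 0 ^ 2) = fun z => z.2 ^ 2 := by
        funext z; rw [hres]
      rw [hre,
        show (fun z : (Fin q → ℝ) × ℝ => z.2 ^ 2) = (fun t : ℝ => t ^ 2) ∘ Prod.snd from rfl,
        ← MeasureTheory.Measure.map_map (show Measurable fun t : ℝ => t ^ 2 by fun_prop)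
          measurable_snd,
        hmapsnd, chiSq1]
    rw [qLTS, hmap2, cCut, Real.sq_sqrt (quant_chiSq1_nonneg ha1)]
  have master : ∀ (H : ((Fin q → ℝ) × ℝ) → ℝ) (F : (Fin q → ℝ) → ℝ) (G : ℝ → ℝ),
      (∀ z : (Fin q → ℝ) × ℝ, H z = if z.2 ^ 2 ≤ cCut a ^ 2 then F z.1 * G z.2 else 0) →
      ∫ z, H z ∂μ = (∫ x, F x ∂(μ.map Prod.fst)) * ∫ t in (-cCut a)..(cCut a), phi t * G t := by
    intro H F G hH
    have h1 : ∀ z : (Fin q → ℝ) × ℝ,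
        H z = F z.1 * (if z.2 ^ 2 ≤ cCut a ^ 2 then G z.2 else 0) := by
      intro z; rw [hH]; split_ifs <;> simp
    calc ∫ z, H z ∂μ
        = ∫ z, F z.1 * (if z.2 ^ 2 ≤ cCut a ^ 2 then G z.2 else 0) ∂μ :=
          integral_congr_ae (Filter.Eventually.of_forall h1)
      _ = ∫ z, F z.1 * (if z.2 ^ 2 ≤ cCut a ^ 2 then G z.2 else 0)
            ∂((μ.map Prod.fst).prod (ProbabilityTheory.gaussianReal 0 1)) := by
          conv_lhs => rw [hmodel]
      _ = (∫ x, F x ∂(μ.map Prod.fst))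
            * ∫ y, (if y ^ 2 ≤ cCut a ^ 2 then G y else 0)
                ∂(ProbabilityTheory.gaussianReal 0 1) :=
          MeasureTheory.integral_prod_mul F (fun y => if y ^ 2 ≤ cCut a ^ 2 then G y else 0)
      _ = _ := by rw [gint hc0]
  have hW : ∀ j j' : Fin (q + 1),
      ∫ x, wcons x j * wcons x j' ∂(μ.map Prod.fst) = if j = j' then 1 else 0 := by
    intro j j'
    have hmw : ∀ j : Fin (q + 1), Measurable fun x : Fin q → ℝ => wcons x j := by
      intro j
      induction j using Fin.cases with
      | zero => simp only [wcons, Fin.cons_zero]; exact measurable_const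
      | succ i => simp only [wcons, Fin.cons_succ]; exact measurable_pi_apply i
    have hbase : ∫ x, wcons x j * wcons x j' ∂(μ.map Prod.fst)
        = ∫ z : (Fin q → ℝ) × ℝ, wcons z.1 j * wcons z.1 j' ∂μ :=
      integral_map measurable_fst.aemeasurable ((hmw j).mul (hmw j')).aestronglyMeasurable
    rw [hbase]
    induction j using Fin.cases with
    | zero =>
      induction j' using Fin.cases with
      | zero => simp [wcons]
      | succ i =>
        simp only [wcons, Fin.cons_zero, Fin.cons_succ, one_mul]
        rw [hcov.1 i]
        simp [(Fin.succ_ne_zero i).symm]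
    | succ i =>
      induction j' using Fin.cases with
      | zero =>
        simp only [wcons, Fin.cons_zero, Fin.cons_succ, mul_one]
        rw [hcov.1 i]
        simp [Fin.succ_ne_zero i]
      | succ k =>
        simp only [wcons, Fin.cons_succ]
        rw [hcov.2.2.1 i k]
        simp [Fin.succ_inj]
  refine ⟨?_, ?_, ?_⟩
  · intro j
    have e1 : (∫ z, (if (resP z 0) ^ 2 ≤ qLTS μ 0 a
          then -2 * resP z 0 * wcons z.1 j else 0) ∂μ)
        = (∫ x, wcons x j ∂(μ.map Prod.fst)) * ∫ t in (-cCut a)..(cCut a), phi t * (-2 * t) :=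
      master _ _ _ (by
        intro z
        rw [hres, hQ]
        split_ifs with h
        · ring
        · rfl)
    rw [e1,
      show (fun t : ℝ => phi t * (-2 * t)) = fun t => (-2) * (t * phi t) from
        funext fun t => by ring,
      intervalIntegral.integral_const_mul, interval_x_phi, mul_zero, mul_zero]
  · intro j j'
    have e2 : (∫ z, (if (resP z 0) ^ 2 ≤ qLTS μ 0 a
          then (-2 * resP z 0 * wcons z.1 j) * (-2 * resP z 0 * wcons z.1 j') else 0) ∂μ)
        = (∫ x, wcons x j * wcons x j' ∂(μ.map Prod.fst))
            * ∫ t in (-cCut a)..(cCut a), phi t * (4 * t ^ 2) :=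
      master _ _ _ (by
        intro z
        rw [hres, hQ]
        split_ifs with h
        · ring
        · rfl)
    have hI : ∫ t in (-cCut a)..(cCut a), phi t * (4 * t ^ 2) = 8 * Cconst a := by
      rw [show (fun t : ℝ => phi t * (4 * t ^ 2)) = fun t => (4:ℝ) * (t ^ 2 * phi t) from
          funext fun t => by ring,
        intervalIntegral.integral_const_mul, interval_sq_phi, interval_phi]
      simp only [Cconst, phi]
      ring
    rw [e2, hW j j', hI, NNReal.coe_one]
    split_ifs <;> ring
  · intro j j'
    have e3 : (∫ z, (if (resP z 0) ^ 2 ≤ qLTS μ 0 a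
          then wcons z.1 j * wcons z.1 j' else 0) ∂μ)
        = (∫ x, wcons x j * wcons x j' ∂(μ.map Prod.fst))
            * ∫ t in (-cCut a)..(cCut a), phi t * 1 :=
      master _ _ _ (by
        intro z
        rw [hres, hQ]
        split_ifs with h
        · ring
        · rfl)
    have hI : ∫ t in (-cCut a)..(cCut a), phi t * 1 = C1const a := by
      simp only [mul_one]
      rw [interval_phi, C1const]
    rw [e3, hW j j', hI]
    split_ifs <;> ring
end
end
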